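/- arXiv:1804.10034 — 3 statements merged into one kernel-verified Lean document; each statement's English description precedes it below -/
import Mathlib

section
/- A sorting network w of the reverse permutation in S_n is 132-avoiding if and only if w is a lattice word of type sc_n = (n-1, n-2, ..., 1). -/
/-- The adjacent transposition `s_a` (1-indexed letter `a`) acting on positions `Fin n`. -/
def adjT (n a : ℕ) : Equiv.Perm (Fin n) :=
  if h : 1 ≤ a ∧ a < n then Equiv.swap ⟨a - 1, by omega⟩ ⟨a, h.2⟩ else 1

/-- The permutation `s_{w_1} ∘ s_{w_2} ∘ ⋯ ∘ s_{w_m}` of a word, transpositions acting on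
positions composed from the left (`s_{w_1}` applied first to the identity). -/
def permOfWord (n : ℕ) (w : List ℕ) : Equiv.Perm (Fin n) :=
  (w.map (adjT n)).prod

/-- The set of inversions of a permutation. -/
def invSet {n : ℕ} (σ : Equiv.Perm (Fin n)) : Set (Fin n × Fin n) :=
  {p | p.1 < p.2 ∧ σ p.2 < σ p.1}

/-- The number of inversions. -/
noncomputable def invNum {n : ℕ} (σ : Equiv.Perm (Fin n)) : ℕ := (invSet σ).ncard

/-- `w` is a reduced word for `σ`: letters in `[n-1]`, the product of the corresponding
adjacent transpositions is `σ`, and the length is `inv σ`. -/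
def IsReducedWord (n : ℕ) (σ : Equiv.Perm (Fin n)) (w : List ℕ) : Prop :=
  (∀ a ∈ w, 1 ≤ a ∧ a < n) ∧ permOfWord n w = σ ∧ w.length = invNum σ

/-- `σ` avoids the pattern 132. -/
def Avoids132 {n : ℕ} (σ : Equiv.Perm (Fin n)) : Prop :=
  ¬ ∃ i1 i2 i3 : Fin n, i1 < i2 ∧ i2 < i3 ∧ σ i1 < σ i3 ∧ σ i3 < σ i2

/-- `σ` avoids the pattern 312. -/
def Avoids312 {n : ℕ} (σ : Equiv.Perm (Fin n)) : Prop :=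
  ¬ ∃ i1 i2 i3 : Fin n, i1 < i2 ∧ i2 < i3 ∧ σ i2 < σ i3 ∧ σ i3 < σ i1

/-- The Rothe diagram of `σ` (permutation matrix with 1s at `(σ i, i)`, 0-indexed):
cells strictly north of the 1 in their column and strictly west of the 1 in their row. -/
def rothe {n : ℕ} (σ : Equiv.Perm (Fin n)) : Set (Fin n × Fin n) :=
  {p | p.1 < σ p.2 ∧ p.2 < σ.symm p.1}

/-- Two cells are adjacent if they share an edge. -/
def adjCell {n : ℕ} (p q : Fin n × Fin n) : Prop :=
  (p.1 = q.1 ∧ ((p.2 : ℕ) + 1 = q.2 ∨ (q.2 : ℕ) + 1 = p.2)) ∨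
  (p.2 = q.2 ∧ ((p.1 : ℕ) + 1 = q.1 ∨ (q.1 : ℕ) + 1 = p.1))

/-- The connected component of the Rothe diagram containing the (0-indexed) cell `(0,0)`,
empty if `(0,0)` is not in the diagram. -/
def comp11 {n : ℕ} (σ : Equiv.Perm (Fin n)) : Set (Fin n × Fin n) :=
  {p | ∃ h0 : 0 < n,
    Relation.ReflTransGen (fun a b => a ∈ rothe σ ∧ b ∈ rothe σ ∧ adjCell a b)
      (⟨⟨0, h0⟩, ⟨0, h0⟩⟩) p ∧
    p ∈ rothe σ ∧ ((⟨⟨0, h0⟩, ⟨0, h0⟩⟩ : Fin n × Fin n)) ∈ rothe σ}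

/-- Edelman–Greene insertion of `x` into a single (strictly increasing) row:
returns the new row and the optional entry bumped into the next row. -/
def insRow (x : ℕ) : List ℕ → List ℕ × Option ℕ
  | [] => ([x], none)
  | z :: zs =>
    if z < x then
      let r := insRow x zs
      (z :: r.1, r.2)
    else if z = x then (z :: zs, some (z + 1))
    else (x :: zs, some z)

/-- Edelman–Greene insertion of `x` into a tableau (list of rows). -/
def insTab (x : ℕ) : List (List ℕ) → List (List ℕ)
  | [] => [[x]]
  | r :: rs =>
    let p := insRow x r
    match p.2 with
    | none => p.1 :: rs
    | some y => p.1 :: insTab y rs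

/-- The Edelman–Greene insertion tableau `P(w)`. -/
def Ptab (w : List ℕ) : List (List ℕ) := w.foldl (fun t x => insTab x t) []

/-- Add the label `k` to the recording tableau `q` at the unique new cell of shape `p`. -/
def recordCell (k : ℕ) : List (List ℕ) → List (List ℕ) → List (List ℕ)
  | _, [] => []
  | [], _ :: _ => [[k]]
  | q :: qs, p :: ps =>
    if q.length < p.length then (q ++ [k]) :: qs else q :: recordCell k qs ps

/-- The Edelman–Greene recording tableau `Q(w) = EG(w)`. -/
def Qtab (w : List ℕ) : List (List ℕ) :=
  (w.foldl (fun pq x =>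
      let P' := insTab x pq.1
      (P', recordCell (pq.2.flatten.length + 1) pq.2 P'))
    (([], []) : List (List ℕ) × List (List ℕ))).2

/-- A tableau is frozen if the cell in (0-indexed) row `i`, column `j` contains `i + j + 1`. -/
def Frozen (P : List (List ℕ)) : Prop :=
  ∀ i j, i < P.length → j < (P.getD i []).length → (P.getD i []).getD j 0 = i + j + 1

/-- All rows strictly increasing. -/
def RowStrict (P : List (List ℕ)) : Prop := ∀ r ∈ P, List.Pairwise (· < ·) r

/-- All columns strictly increasing. -/
def ColStrict (P : List (List ℕ)) : Prop :=
  ∀ i j, i + 1 < P.length → j < (P.getD (i + 1) []).length →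
    (P.getD i []).getD j 0 < (P.getD (i + 1) []).getD j 0

/-- Valid Young-diagram shape: nonempty rows of weakly decreasing lengths. -/
def TabShape (P : List (List ℕ)) : Prop :=
  (∀ r ∈ P, r ≠ []) ∧ ∀ i, i + 1 < P.length → (P.getD (i + 1) []).length ≤ (P.getD i []).length

/-- The reading word: rows left to right, from the bottom row up. -/
def readingWord (P : List (List ℕ)) : List ℕ := P.reverse.flatten

/-- A standard Young tableau: valid shape, strictly increasing rows and columns, and the
entries are `1, …, N` each exactly once. -/
def IsStandard (Q : List (List ℕ)) : Prop :=
  TabShape Q ∧ RowStrict Q ∧ ColStrict Q ∧ Q.flatten.Perm (List.range' 1 Q.flatten.length)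

/-- `Q` has the staircase shape `sc_n = (n-1, n-2, …, 1)`. -/
def StaircaseShape (n : ℕ) (Q : List (List ℕ)) : Prop :=
  Q.length = n - 1 ∧ ∀ i, i < n - 1 → (Q.getD i []).length = n - 1 - i

/-- A sorting network: a reduced word of the reverse permutation in `S_n`. -/
def IsSortingNetwork (n : ℕ) (w : List ℕ) : Prop :=
  IsReducedWord n Fin.revPerm w

/-- Every intermediate permutation of the word avoids 132. -/
def Avoiding132 (n : ℕ) (w : List ℕ) : Prop :=
  ∀ k, k ≤ w.length → Avoids132 (permOfWord n (w.take k))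

/-- Every intermediate permutation of the word avoids 312. -/
def Avoiding312 (n : ℕ) (w : List ℕ) : Prop :=
  ∀ k, k ≤ w.length → Avoids312 (permOfWord n (w.take k))

/-- `c` is the column word of `Q`: its `k`-th letter (1-indexed) is the (1-indexed) column
of the entry `k` in `Q`. -/
def IsColumnWord (Q : List (List ℕ)) (c : List ℕ) : Prop :=
  c.length = Q.flatten.length ∧
  ∀ k, k < c.length → ∃ i j, i < Q.length ∧ j < (Q.getD i []).length ∧
    (Q.getD i []).getD j 0 = k + 1 ∧ c.getD k 0 = j + 1

/-- All anti-diagonals of `Q` increase downwards: `Q_{i,j} > Q_{i-1,j+1}` (1-indexed). -/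
def AntiDiagDown (Q : List (List ℕ)) : Prop :=
  ∀ i j, i + 1 < Q.length → j < (Q.getD (i + 1) []).length → j + 1 < (Q.getD i []).length →
    (Q.getD i []).getD (j + 1) 0 < (Q.getD (i + 1) []).getD j 0

/-- A lattice word of type `sc_n = (n-1, n-2, …, 1)`: every prefix has at least as many
`i`'s as `(i+1)`'s, and the letter `i` occurs exactly `n - i` times for `1 ≤ i ≤ n-1`
(and no other letters occur). -/
def LatticeWordSC (n : ℕ) (w : List ℕ) : Prop :=
  (∀ k i : ℕ, 1 ≤ i → (w.take k).count (i + 1) ≤ (w.take k).count i) ∧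
  ∀ i : ℕ, w.count i = if 1 ≤ i ∧ i < n then n - i else 0

namespace SNaux

/-- profile: weakly decreasing with steps ≤ 1, bounded by staircase -/
def Profile (n : ℕ) (c : ℕ → ℕ) : Prop :=
  (∀ a, 1 ≤ a → c (a+1) ≤ c a ∧ c a ≤ c (a+1) + 1) ∧ (∀ a, 1 ≤ a → c a ≤ n - a)

/-- explicit position of value v (1-indexed) in the permutation associated to c -/
def posC (n : ℕ) (c : ℕ → ℕ) (v : ℕ) : ℕ :=
  ((Finset.Icc 1 (n-1)).filter (fun d => c d + d < v)).card +
  ((Finset.Icc 1 (n-1)).filter (fun d => v ≤ c d)).card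

def InvS (n : ℕ) (σ : Equiv.Perm (Fin n)) (c : ℕ → ℕ) : Prop :=
  ∀ v : Fin n, (σ.symm v : ℕ) = posC n c ((v : ℕ) + 1)

def PosInv (n : ℕ) (c : ℕ → ℕ) : Prop :=
  ∀ x y, 1 ≤ x → x < y → y ≤ n → (posC n c y < posC n c x ↔ x ≤ c (y - x))

def Inv (n : ℕ) (σ : Equiv.Perm (Fin n)) (c : ℕ → ℕ) : Prop :=
  Profile n c ∧ InvS n σ c ∧ PosInv n c

variable {n : ℕ} {c : ℕ → ℕ}

lemma cmono (hc : Profile n c) {d e : ℕ} (hd : 1 ≤ d) (hde : d ≤ e) : c e ≤ c d := by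
  obtain ⟨k, rfl⟩ := Nat.exists_eq_add_of_le hde
  clear hde
  induction k with
  | zero => simp
  | succ k ih => exact le_trans ((hc.1 (d+k) (by omega)).1) ih

lemma cstep (hc : Profile n c) {d e : ℕ} (hd : 1 ≤ d) (hde : d ≤ e) : c d ≤ c e + (e - d) := by
  obtain ⟨k, rfl⟩ := Nat.exists_eq_add_of_le hde
  clear hde
  induction k with
  | zero => simp
  | succ k ih =>
      have h1 : c (d + k) ≤ c (d + (k + 1)) + 1 := (hc.1 (d+k) (by omega)).2
      omega

lemma card_Icc_one (m : ℕ) : (Finset.Icc 1 m).card = m := by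
  rw [Nat.card_Icc]; omega

lemma filter_eq_Icc {p : ℕ → Prop} [DecidablePred p] {m : ℕ} (hm : m ≤ n - 1)
    (h1 : ∀ d, 1 ≤ d → d ≤ m → p d) (h2 : ∀ d, m < d → d ≤ n - 1 → ¬ p d) :
    (Finset.Icc 1 (n-1)).filter p = Finset.Icc 1 m := by
  ext d
  simp only [Finset.mem_filter, Finset.mem_Icc]
  constructor
  · rintro ⟨⟨hd1, hd2⟩, hp⟩
    refine ⟨hd1, ?_⟩
    by_contra hh
    exact h2 d (by omega) hd2 hp
  · rintro ⟨hd1, hd2⟩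
    exact ⟨⟨hd1, by omega⟩, h1 d hd1 hd2⟩

lemma filter_card_eq {p : ℕ → Prop} [DecidablePred p] {m : ℕ} (hm : m ≤ n - 1)
    (h1 : ∀ d, 1 ≤ d → d ≤ m → p d) (h2 : ∀ d, m < d → d ≤ n - 1 → ¬ p d) :
    ((Finset.Icc 1 (n-1)).filter p).card = m := by
  rw [filter_eq_Icc hm h1 h2, card_Icc_one]

/-- position of u = c b + 1 is b - 1, when c is strictly bigger on [1,b) -/
lemma posC_u (hc : Profile n c) {b : ℕ} (hb1 : 1 ≤ b) (hbn : b < n)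
    (hlow : ∀ d, 1 ≤ d → d < b → c b < c d) :
    posC n c (c b + 1) = b - 1 := by
  unfold posC
  have hA : ((Finset.Icc 1 (n-1)).filter (fun d => c d + d < c b + 1)).card = 0 := by
    apply filter_card_eq (Nat.zero_le _) (by omega)
    intro d hd0 hd hlt
    rcases le_or_gt d b with h | h
    · have := cmono hc hd0 h; omega
    · have := cstep hc hb1 h.le; omega
  have hB : ((Finset.Icc 1 (n-1)).filter (fun d => c b + 1 ≤ c d)).card = b - 1 := by
    apply filter_card_eq (by omega)
    · intro d hd1 hd2; exact hlow d hd1 (by omega)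
    · intro d hd1 hd2 hle
      have := cmono hc hb1 (by omega : b ≤ d); omega
  omega

/-- position of t = c b + 1 + b is b, when c (b+1) = c b -/
lemma posC_t (hc : Profile n c) {b : ℕ} (hb1 : 1 ≤ b) (hbn : b < n)
    (heq : c (b+1) = c b) :
    posC n c (c b + 1 + b) = b := by
  unfold posC
  have hA : ((Finset.Icc 1 (n-1)).filter (fun d => c d + d < c b + 1 + b)).card = b := by
    apply filter_card_eq (by omega)
    · intro d hd1 hd2
      have := cstep hc hd1 hd2; omega
    · intro d hd1 hd2 hlt
      have := cstep hc (by omega : 1 ≤ b+1) (by omega : b + 1 ≤ d); omega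
  have hB : ((Finset.Icc 1 (n-1)).filter (fun d => c b + 1 + b ≤ c d)).card = 0 := by
    apply filter_card_eq (Nat.zero_le _) (by omega)
    intro d hd1 hd2 hle
    have h1 := cstep hc le_rfl hb1
    have h2 := cmono hc le_rfl hd1
    omega
  omega

/-- position of the value c a when c a = c (a+1) + 1 -/
lemma posC_ca (hc : Profile n c) {a : ℕ} (ha1 : 1 ≤ a) (han : a < n)
    (hstep : c a = c (a+1) + 1) :
    posC n c (c a) = a := by
  unfold posC
  have hA : ((Finset.Icc 1 (n-1)).filter (fun d => c d + d < c a)).card = 0 := by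
    apply filter_card_eq (Nat.zero_le _) (by omega)
    intro d hd1 hd2 hlt
    rcases le_or_gt d a with h | h
    · have := cmono hc hd1 h; omega
    · have := cstep hc (by omega : 1 ≤ a + 1) (by omega : a + 1 ≤ d); omega
  have hB : ((Finset.Icc 1 (n-1)).filter (fun d => c a ≤ c d)).card = a := by
    apply filter_card_eq (by omega)
    · intro d hd1 hd2; exact cmono hc hd1 hd2
    · intro d hd1 hd2 hle
      have := cmono hc (by omega : 1 ≤ a + 1) hd1; omega
  omega

/-- small values sit far right when c a = c (a+1) + 1 -/
lemma posC_small (hc : Profile n c) {a v : ℕ} (ha1 : 1 ≤ a) (han : a + 1 ≤ n - 1)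
    (hstep : c a = c (a+1) + 1) (hv1 : 1 ≤ v) (hv : v < c a) :
    a + 1 ≤ posC n c v := by
  unfold posC
  have : Finset.Icc 1 (a+1) ⊆ (Finset.Icc 1 (n-1)).filter (fun d => v ≤ c d) := by
    intro d hd
    simp only [Finset.mem_Icc] at hd
    simp only [Finset.mem_filter, Finset.mem_Icc]
    refine ⟨⟨hd.1, by omega⟩, ?_⟩
    have := cmono hc hd.1 (by omega : d ≤ a + 1); omega
  have h2 := Finset.card_le_card this
  rw [card_Icc_one] at h2
  omega

end SNaux
namespace SNaux
variable {n : ℕ} {c : ℕ → ℕ} {σ : Equiv.Perm (Fin n)}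

lemma card_filter_swap {s : Finset ℕ} {a : ℕ} (ha : a ∈ s) (p q : ℕ → Prop)
    [DecidablePred p] [DecidablePred q] (h : ∀ d ∈ s, d ≠ a → (p d ↔ q d)) :
    (s.filter p).card + (if q a then 1 else 0) = (s.filter q).card + (if p a then 1 else 0) := by
  rw [Finset.card_filter, Finset.card_filter]
  rw [← Finset.add_sum_erase _ _ ha, ← Finset.add_sum_erase _ _ ha]
  have he : ∑ x ∈ s.erase a, (if p x then 1 else 0) = ∑ x ∈ s.erase a, (if q x then 1 else 0) :=
    Finset.sum_congr rfl (fun d hd => by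
      have hne := Finset.ne_of_mem_erase hd
      exact if_congr (h d (Finset.mem_of_mem_erase hd) hne) rfl rfl)
  omega

/-- combined update formula for posC -/
lemma posC_update {a : ℕ} (ha1 : 1 ≤ a) (han : a ≤ n - 1) (v : ℕ) :
    posC n (Function.update c a (c a + 1)) v + (if v = c a + 1 + a then 1 else 0)
      = posC n c v + (if v = c a + 1 then 1 else 0) := by
  have hmem : a ∈ Finset.Icc 1 (n-1) := by simp only [Finset.mem_Icc]; omega
  have hother : ∀ d, d ≠ a → Function.update c a (c a + 1) d = c d :=
    fun d hd => Function.update_of_ne hd _ c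
  have e1 : (Finset.filter (fun d => Function.update c a (c a+1) d + d < v) (Finset.Icc 1 (n-1))).card
      + (if c a + a < v then 1 else 0)
      = (Finset.filter (fun d => c d + d < v) (Finset.Icc 1 (n-1))).card
      + (if c a + 1 + a < v then 1 else 0) := by
    have h := card_filter_swap hmem (fun d => Function.update c a (c a+1) d + d < v)
      (fun d => c d + d < v) (fun d _ hd => by simp only [hother d hd])
    simpa using h
  have e2 : (Finset.filter (fun d => v ≤ Function.update c a (c a+1) d) (Finset.Icc 1 (n-1))).card
      + (if v ≤ c a then 1 else 0)
      = (Finset.filter (fun d => v ≤ c d) (Finset.Icc 1 (n-1))).card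
      + (if v ≤ c a + 1 then 1 else 0) := by
    have h := card_filter_swap hmem (fun d => v ≤ Function.update c a (c a+1) d)
      (fun d => v ≤ c d) (fun d _ hd => by simp only [hother d hd])
    simpa using h
  simp only [posC]
  split_ifs at e1 e2 ⊢ <;> omega

lemma pos_inj (hs : InvS n σ c) {x y : ℕ} (hx1 : 1 ≤ x) (hxn : x ≤ n) (hy1 : 1 ≤ y) (hyn : y ≤ n)
    (h : posC n c x = posC n c y) : x = y := by
  have hx' : x - 1 < n := by omega
  have hy' : y - 1 < n := by omega
  have h1 : (σ.symm ⟨x-1, hx'⟩ : ℕ) = posC n c x := by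
    simpa [Nat.sub_add_cancel hx1] using hs ⟨x-1, hx'⟩
  have h2 : (σ.symm ⟨y-1, hy'⟩ : ℕ) = posC n c y := by
    simpa [Nat.sub_add_cancel hy1] using hs ⟨y-1, hy'⟩
  have hh : σ.symm ⟨x-1, hx'⟩ = σ.symm ⟨y-1, hy'⟩ := Fin.ext (by rw [h1, h2, h])
  have h5 := σ.symm.injective hh
  rw [Fin.mk.injEq] at h5
  omega

lemma pos_le (hs : InvS n σ c) {x : ℕ} (hx1 : 1 ≤ x) (hxn : x ≤ n) : posC n c x < n := by
  have hx' : x - 1 < n := by omega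
  have h1 : (σ.symm ⟨x-1, hx'⟩ : ℕ) = posC n c x := by
    simpa [Nat.sub_add_cancel hx1] using hs ⟨x-1, hx'⟩
  rw [← h1]
  exact (σ.symm _).isLt

lemma sigma_val (hs : InvS n σ c) {x p : ℕ} (hx1 : 1 ≤ x) (hxn : x ≤ n) (hp : p < n)
    (h : posC n c x = p) : (σ ⟨p, hp⟩ : ℕ) = x - 1 := by
  have hx' : x - 1 < n := by omega
  have h1 : (σ.symm ⟨x-1, hx'⟩ : ℕ) = posC n c x := by
    simpa [Nat.sub_add_cancel hx1] using hs ⟨x-1, hx'⟩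
  have h2 : σ.symm ⟨x-1, hx'⟩ = ⟨p, hp⟩ := Fin.ext (by rw [h1, h])
  have h3 : σ ⟨p, hp⟩ = ⟨x-1, hx'⟩ := by rw [← h2, Equiv.apply_symm_apply]
  rw [h3]

lemma ascent_eq (hI : Inv n σ c) {a : ℕ} (ha1 : 1 ≤ a) (han : a < n)
    (hasc : (σ ⟨a-1, by omega⟩ : ℕ) < (σ ⟨a, han⟩ : ℕ)) : c (a+1) = c a := by
  obtain ⟨hc, hs, hp⟩ := hI
  have hd := hc.1 a ha1
  by_contra hne
  have hstep : c a = c (a+1) + 1 := by omega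
  have hca1 : 1 ≤ c a := by omega
  have hcan : c a ≤ n - a := hc.2 a ha1
  have hpos : posC n c (c a) = a := posC_ca hc ha1 han hstep
  have hσa : (σ ⟨a, han⟩ : ℕ) = c a - 1 := sigma_val hs hca1 (by omega) han hpos
  have hx : posC n c ((σ ⟨a-1, by omega⟩ : ℕ)+1) = a - 1 := by
    have h := hs (σ ⟨a-1, by omega⟩)
    rw [Equiv.symm_apply_apply] at h
    simpa using h.symm
  have hxlt : (σ ⟨a-1, by omega⟩ : ℕ) + 1 < c a := by omega
  rcases le_or_gt (a+1) (n-1) with hcase | hcase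
  · have := posC_small hc ha1 hcase hstep (by omega) hxlt
    omega
  · have : c a ≤ 1 := by omega
    omega

lemma inv_avoids (hI : Inv n σ c) : Avoids132 σ := by
  rintro ⟨i1, i2, i3, h12, h23, h13, h32⟩
  obtain ⟨hc, hs, hp⟩ := hI
  have posx : posC n c ((σ i1 : ℕ) + 1) = (i1 : ℕ) := by
    have h := hs (σ i1); rw [Equiv.symm_apply_apply] at h; exact h.symm
  have posz : posC n c ((σ i2 : ℕ) + 1) = (i2 : ℕ) := by
    have h := hs (σ i2); rw [Equiv.symm_apply_apply] at h; exact h.symm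
  have posy : posC n c ((σ i3 : ℕ) + 1) = (i3 : ℕ) := by
    have h := hs (σ i3); rw [Equiv.symm_apply_apply] at h; exact h.symm
  set x := (σ i1 : ℕ) + 1
  set z := (σ i2 : ℕ) + 1
  set y := (σ i3 : ℕ) + 1
  have hxy : x < y := by have := Fin.lt_iff_val_lt_val.mp h13; omega
  have hyz : y < z := by have := Fin.lt_iff_val_lt_val.mp h32; omega
  have h23' : (i2 : ℕ) < (i3 : ℕ) := Fin.lt_iff_val_lt_val.mp h23
  have h12' : (i1 : ℕ) < (i2 : ℕ) := Fin.lt_iff_val_lt_val.mp h12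
  have hzn : z ≤ n := by have := (σ i2).isLt; omega
  have hyc : y ≤ c (z - y) :=
    (hp y z (by omega) hyz hzn).mp (by omega)
  have hxc : x ≤ c (z - x) := by
    have hst := cstep hc (by omega : 1 ≤ z - y) (by omega : z - y ≤ z - x)
    omega
  have := (hp x z (by omega) (by omega) hzn).mpr hxc
  omega

end SNaux
namespace SNaux
variable {n : ℕ} {c : ℕ → ℕ} {σ : Equiv.Perm (Fin n)}

lemma adjT_eq {a : ℕ} (ha1 : 1 ≤ a) (han : a < n) (hA1 : a - 1 < n) :
    adjT n a = Equiv.swap (⟨a-1, hA1⟩ : Fin n) ⟨a, han⟩ := by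
  unfold adjT
  rw [dif_pos ⟨ha1, han⟩]

lemma mul_adjT_symm {a : ℕ} (ha1 : 1 ≤ a) (han : a < n) (hA1 : a - 1 < n) (v : Fin n) :
    (σ * adjT n a).symm v
      = Equiv.swap (⟨a-1, hA1⟩ : Fin n) ⟨a, han⟩ (σ.symm v) := by
  rw [adjT_eq ha1 han hA1]
  rfl

lemma mul_adjT_apply {a : ℕ} (ha1 : 1 ≤ a) (han : a < n) (hA1 : a - 1 < n) (p : Fin n) :
    (σ * adjT n a) p = σ (Equiv.swap (⟨a-1, hA1⟩ : Fin n) ⟨a, han⟩ p) := by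
  rw [adjT_eq ha1 han hA1]
  rfl

set_option maxHeartbeats 2000000 in
lemma step_update (hc : Profile n c) (hs : InvS n σ c) (hp : PosInv n c) {a : ℕ}
    (ha1 : 1 ≤ a) (han : a < n)
    (heq : c (a+1) = c a) (hlow : ∀ d, 1 ≤ d → d < a → c a < c d) :
    (σ ⟨a-1, by omega⟩ : ℕ) = c a ∧ (σ ⟨a, han⟩ : ℕ) = c a + a ∧
    Inv n (σ * adjT n a) (Function.update c a (c a + 1)) := by
  have hA1 : a - 1 < n := by omega
  have hroom : c a + 1 + a ≤ n := by
    have h1 := hc.2 (a+1) (by omega)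
    omega
  have hPu : posC n c (c a + 1) = a - 1 := posC_u hc ha1 han hlow
  have hPt : posC n c (c a + 1 + a) = a := posC_t hc ha1 han heq
  have hvu : (σ ⟨a-1, by omega⟩ : ℕ) = c a := by
    have h := sigma_val hs (x := c a + 1) (by omega) (by omega) (by omega : a - 1 < n) hPu
    simpa using h
  have hvt : (σ ⟨a, han⟩ : ℕ) = c a + a := by
    have h := sigma_val hs (x := c a + 1 + a) (by omega) hroom han hPt
    simpa using h
  refine ⟨hvu, hvt, ?_, ?_, ?_⟩
  · -- Profile
    constructor
    · intro d hd
      rcases eq_or_ne d a with rfl | h1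
      · rw [Function.update_self, Function.update_of_ne (by omega : d + 1 ≠ d)]
        omega
      · rw [Function.update_of_ne h1]
        rcases eq_or_ne (d+1) a with he2 | h2
        · rw [he2, Function.update_self]
          have l1 := hlow d hd (by omega)
          have l2 := cstep hc hd (by omega : d ≤ a)
          omega
        · rw [Function.update_of_ne h2]
          exact hc.1 d hd
    · intro d hd
      rcases eq_or_ne d a with rfl | h1
      · rw [Function.update_self]
        have := hc.2 (d+1) (by omega)
        omega
      · rw [Function.update_of_ne h1]
        exact hc.2 d hd
  · -- InvS
    intro v
    have hupd := posC_update (c := c) ha1 (by omega : a ≤ n - 1)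
    rw [mul_adjT_symm ha1 han hA1 v]
    rcases eq_or_ne ((v:ℕ)+1) (c a + 1) with hvu' | hne1
    · have hsv : (σ.symm v : ℕ) = a - 1 := by rw [hs v, hvu', hPu]
      have hsv' : σ.symm v = ⟨a-1, hA1⟩ := Fin.ext (by simpa using hsv)
      rw [hsv', Equiv.swap_apply_left]
      have h' := hupd ((v:ℕ)+1)
      rw [hvu'] at h' ⊢
      split_ifs at h' <;> simp <;> omega
    · rcases eq_or_ne ((v:ℕ)+1) (c a + 1 + a) with hvt' | hne2
      · have hsv : (σ.symm v : ℕ) = a := by rw [hs v, hvt', hPt]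
        have hsv' : σ.symm v = ⟨a, han⟩ := Fin.ext (by simpa using hsv)
        rw [hsv', Equiv.swap_apply_right]
        have h' := hupd ((v:ℕ)+1)
        rw [hvt'] at h' ⊢
        split_ifs at h' <;> simp <;> omega
      · have hb1 : (v:ℕ) + 1 ≤ n := by have := v.isLt; omega
        have hne1' : (σ.symm v : ℕ) ≠ a - 1 := by
          intro hcon
          have he : posC n c ((v:ℕ)+1) = posC n c (c a + 1) := by
            rw [← hs v, hcon, hPu]
          exact hne1 (pos_inj hs (by omega) hb1 (by omega) (by omega) he)
        have hne2' : (σ.symm v : ℕ) ≠ a := by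
          intro hcon
          have he : posC n c ((v:ℕ)+1) = posC n c (c a + 1 + a) := by
            rw [← hs v, hcon, hPt]
          exact hne2 (pos_inj hs (by omega) hb1 (by omega) hroom he)
        have hfix : Equiv.swap (⟨a-1, hA1⟩ : Fin n) ⟨a, han⟩ (σ.symm v) = σ.symm v :=
          Equiv.swap_apply_of_ne_of_ne
            (by intro hcon; exact hne1' (by rw [hcon]))
            (by intro hcon; exact hne2' (by rw [hcon]))
        rw [hfix, hs v]
        have h' := hupd ((v:ℕ)+1)
        split_ifs at h' <;> omega
  · -- PosInv
    intro x y hx1 hxy hyn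
    have hupd := posC_update (c := c) ha1 (by omega : a ≤ n - 1)
    have hxn : x ≤ n := by omega
    have holdxy := hp x y hx1 hxy hyn
    have hux := hupd x
    have huy := hupd y
    have hxu_pos : x = c a + 1 → posC n c x = a - 1 := fun h => by rw [h, hPu]
    have hxt_pos : x = c a + 1 + a → posC n c x = a := fun h => by rw [h, hPt]
    have hyu_pos : y = c a + 1 → posC n c y = a - 1 := fun h => by rw [h, hPu]
    have hyt_pos : y = c a + 1 + a → posC n c y = a := fun h => by rw [h, hPt]
    have hxu_inj : posC n c x = a - 1 → x = c a + 1 := fun h =>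
      pos_inj hs hx1 hxn (by omega) (by omega) (by rw [h, hPu])
    have hxt_inj : posC n c x = a → x = c a + 1 + a := fun h =>
      pos_inj hs hx1 hxn (by omega) hroom (by rw [h, hPt])
    have hyu_inj : posC n c y = a - 1 → y = c a + 1 := fun h =>
      pos_inj hs (by omega) hyn (by omega) (by omega) (by rw [h, hPu])
    have hyt_inj : posC n c y = a → y = c a + 1 + a := fun h =>
      pos_inj hs (by omega) hyn (by omega) hroom (by rw [h, hPt])
    rcases eq_or_ne (y - x) a with hd | hd
    · have hce : c (y - x) = c a := by rw [hd]
      have hc'e : Function.update c a (c a + 1) (y - x) = c a + 1 := by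
        rw [hd, Function.update_self]
      rw [hc'e]
      split_ifs at hux huy <;> omega
    · have hc'e : Function.update c a (c a + 1) (y - x) = c (y - x) :=
        Function.update_of_ne hd _ c
      rw [hc'e]
      split_ifs at hux huy <;> omega

set_option maxHeartbeats 1000000 in
lemma step_132 (hc : Profile n c) (hs : InvS n σ c) (hp : PosInv n c) {a : ℕ}
    (ha1 : 1 ≤ a) (han : a < n)
    (hasc : (σ ⟨a-1, by omega⟩ : ℕ) < (σ ⟨a, han⟩ : ℕ))
    (hav : Avoids132 (σ * adjT n a)) :
    ∀ d, 1 ≤ d → d < a → c a < c d := by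
  have hA1 : a - 1 < n := by omega
  have hasc' : (σ ⟨a-1, hA1⟩ : ℕ) < (σ ⟨a, han⟩ : ℕ) := hasc
  clear hasc
  have hPu : posC n c ((σ ⟨a-1, hA1⟩ : ℕ) + 1) = a - 1 := by
    have h := hs (σ ⟨a-1, hA1⟩)
    rw [Equiv.symm_apply_apply] at h
    exact h.symm
  have hPt : posC n c ((σ ⟨a, han⟩ : ℕ) + 1) = a := by
    have h := hs (σ ⟨a, han⟩)
    rw [Equiv.symm_apply_apply] at h
    exact h.symm
  set u := (σ ⟨a-1, hA1⟩ : ℕ) + 1 with hudef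
  set t := (σ ⟨a, han⟩ : ℕ) + 1 with htdef
  have hut : u < t := by omega
  have htn : t ≤ n := by
    have := (σ ⟨a, han⟩).isLt; omega
  set b := t - u with hbdef
  have hb1 : 1 ≤ b := by omega
  have hbn : b < n := by omega
  have hcb : c b < u := by
    have h := hp u t (by omega) hut htn
    rw [← hbdef] at h
    omega
  -- u = c b + 1 and c b = c (b+1)
  have hkey : u = c b + 1 ∧ c b = c (b+1) := by
    rcases eq_or_lt_of_le (show 1 ≤ u by omega) with h1 | h2
    · have : c (b+1) ≤ c b := (hc.1 b hb1).1
      omega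
    · -- u ≥ 2
      have hcb1 : u - 1 ≤ c (b+1) := by
        by_contra hno
        have hiff := hp (u-1) t (by omega) (by omega) htn
        have hdist : t - (u - 1) = b + 1 := by omega
        rw [hdist] at hiff
        have hle : posC n c (u-1) ≤ a := by
          rcases le_or_gt (posC n c (u-1)) a with h | h
          · exact h
          · exact absurd (hiff.mp (by omega)) (by omega)
        have hnea : posC n c (u-1) ≠ a := by
          intro hcon
          have he : posC n c (u-1) = posC n c t := by rw [hcon, hPt]
          have := pos_inj hs (by omega) (by omega) (by omega) htn he
          omega
        have hnea1 : posC n c (u-1) ≠ a - 1 := by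
          intro hcon
          have he : posC n c (u-1) = posC n c u := by rw [hcon, hPu]
          have := pos_inj hs (by omega) (by omega) (by omega) (by omega) he
          omega
        have ha2 : 2 ≤ a := by
          by_contra hh
          have : a = 1 := by omega
          omega
        have hq : posC n c (u-1) ≤ a - 2 := by omega
        have hqn : posC n c (u-1) < n := pos_le hs (by omega) (by omega)
        have hσq : (σ ⟨posC n c (u-1), hqn⟩ : ℕ) = u - 1 - 1 :=
          sigma_val hs (by omega) (by omega) hqn rfl
        -- build the 132 pattern in σ * adjT n a
        refine hav ⟨⟨posC n c (u-1), hqn⟩, ⟨a-1, hA1⟩, ⟨a, han⟩, ?_, ?_, ?_, ?_⟩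
        · exact Fin.lt_iff_val_lt_val.mpr (by simp only [Fin.val_mk]; omega)
        · exact Fin.lt_iff_val_lt_val.mpr (by simp only [Fin.val_mk]; omega)
        · -- σ' i1 < σ' i3
          rw [mul_adjT_apply ha1 han hA1, mul_adjT_apply ha1 han hA1]
          rw [Equiv.swap_apply_of_ne_of_ne
              (by intro hcon; rw [Fin.mk.injEq] at hcon; omega)
              (by intro hcon; rw [Fin.mk.injEq] at hcon; omega),
            Equiv.swap_apply_right]
          refine Fin.lt_iff_val_lt_val.mpr ?_
          rw [hσq]
          omega
        · -- σ' i3 < σ' i2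
          rw [mul_adjT_apply ha1 han hA1, mul_adjT_apply ha1 han hA1]
          rw [Equiv.swap_apply_left, Equiv.swap_apply_right]
          exact Fin.lt_iff_val_lt_val.mpr (by omega)
      have h3 : c (b+1) ≤ c b := (hc.1 b hb1).1
      omega
  -- strictness on [1,b)
  have hstrict : ∀ d, 1 ≤ d → d < b → c b < c d := by
    have hb2 : 2 ≤ b → c b < c (b-1) := by
      intro hb2
      by_contra hle'
      have hmono := cmono hc (by omega : 1 ≤ b - 1) (by omega : b - 1 ≤ b)
      have hiff1 := hp u (t-1) (by omega) (by omega) (by omega)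
      have hdist1 : t - 1 - u = b - 1 := by omega
      rw [hdist1] at hiff1
      have hgt0 : ¬ (posC n c (t-1) < posC n c u) := by
        rw [hiff1]; omega
      have hne_u : posC n c (t-1) ≠ a - 1 := by
        intro hcon
        have he : posC n c (t-1) = posC n c u := by rw [hcon, hPu]
        have := pos_inj hs (by omega) (by omega) (by omega) (by omega) he
        omega
      have hne_t : posC n c (t-1) ≠ a := by
        intro hcon
        have he : posC n c (t-1) = posC n c t := by rw [hcon, hPt]
        have := pos_inj hs (by omega) (by omega) (by omega) htn he
        omega
      have hgt : a < posC n c (t-1) := by omega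
      have hiff2 := hp (t-1) t (by omega) (by omega) htn
      have hdist2 : t - (t-1) = 1 := by omega
      rw [hdist2] at hiff2
      have hm : t - 1 ≤ c 1 := hiff2.mp (by omega)
      have hch := cstep hc (by omega : (1:ℕ) ≤ 1) hb1
      omega
    intro d hd1 hd2
    have h1 := cmono hc hd1 (by omega : d ≤ b - 1)
    have h2 := hb2 (by omega)
    omega
  -- b = a
  have hba : b = a := by
    have hpu2 := posC_u hc hb1 hbn hstrict
    have he : c b + 1 = u := by omega
    rw [he, hPu] at hpu2
    omega
  intro d hd1 hd2
  rw [← hba]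
  exact hstrict d hd1 (by omega)

end SNaux
namespace SNaux
variable {n : ℕ}

lemma invNum_symm (σ : Equiv.Perm (Fin n)) : invNum σ.symm = invNum σ := by
  unfold invNum
  have hinj : Function.Injective (fun p : Fin n × Fin n => (σ p.2, σ p.1)) := by
    intro p q h
    simp only [Prod.mk.injEq] at h
    exact Prod.ext (σ.injective h.2) (σ.injective h.1)
  have himg : invSet σ.symm = (fun p : Fin n × Fin n => (σ p.2, σ p.1)) '' invSet σ := by
    ext q
    simp only [invSet, Set.mem_setOf_eq, Set.mem_image, Prod.exists]
    constructor
    · rintro ⟨h1, h2⟩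
      exact ⟨σ.symm q.2, σ.symm q.1, ⟨h2, by simpa using h1⟩, by simp⟩
    · rintro ⟨p1, p2, ⟨hlt, hinv⟩, heq⟩
      rw [← heq]
      exact ⟨hinv, by simpa using hlt⟩
  rw [himg, Set.ncard_image_of_injective _ hinj]

lemma invNum_one : invNum (1 : Equiv.Perm (Fin n)) = 0 := by
  unfold invNum
  convert Set.ncard_empty (Fin n × Fin n)
  ext p
  simp only [invSet, Set.mem_setOf_eq, Set.mem_empty_iff_false, iff_false, not_and]
  intro h
  simpa using lt_asymm h

set_option maxHeartbeats 1000000 in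
lemma invNum_adjT_asc {σ : Equiv.Perm (Fin n)} {a : ℕ} (ha1 : 1 ≤ a) (han : a < n)
    (hasc : (σ ⟨a-1, by omega⟩ : ℕ) < (σ ⟨a, han⟩ : ℕ)) :
    invNum (σ * adjT n a) = invNum σ + 1 := by
  have hA1 : a - 1 < n := by omega
  have hasc' : (σ ⟨a-1, hA1⟩ : ℕ) < (σ ⟨a, han⟩ : ℕ) := hasc
  clear hasc
  have hswv : ∀ z : Fin n, ((Equiv.swap (⟨a-1, hA1⟩ : Fin n) ⟨a, han⟩) z : ℕ)
      = if (z : ℕ) = a - 1 then a else if (z : ℕ) = a then a - 1 else (z : ℕ) := by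
    intro z
    rcases eq_or_ne z ⟨a-1, hA1⟩ with rfl | h1
    · rw [Equiv.swap_apply_left, if_pos rfl]
    · have h1' : (z : ℕ) ≠ a - 1 := fun hcon => h1 (Fin.ext hcon)
      rcases eq_or_ne z ⟨a, han⟩ with rfl | h2
      · rw [Equiv.swap_apply_right, if_neg h1', if_pos rfl]
      · have h2' : (z : ℕ) ≠ a := fun hcon => h2 (Fin.ext hcon)
        rw [Equiv.swap_apply_of_ne_of_ne h1 h2, if_neg h1', if_neg h2']
  have hnotmem : ((σ ⟨a-1, hA1⟩, σ ⟨a, han⟩) : Fin n × Fin n) ∉ invSet σ.symm := by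
    simp only [invSet, Set.mem_setOf_eq, not_and]
    intro h
    simp only [Equiv.symm_apply_apply]
    intro hcon
    have := Fin.lt_iff_val_lt_val.mp hcon
    simp only [Fin.val_mk] at this
    omega
  have hmain : invSet (σ * adjT n a).symm
      = insert (σ ⟨a-1, hA1⟩, σ ⟨a, han⟩) (invSet σ.symm) := by
    ext q
    simp only [invSet, Set.mem_setOf_eq, Set.mem_insert_iff]
    have hpair : q = (σ ⟨a-1, hA1⟩, σ ⟨a, han⟩)
        ↔ ((σ.symm q.1 : ℕ) = a - 1 ∧ (σ.symm q.2 : ℕ) = a) := by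
      rw [Prod.ext_iff]
      constructor
      · rintro ⟨e1, e2⟩
        rw [e1, e2, Equiv.symm_apply_apply, Equiv.symm_apply_apply]
        exact ⟨rfl, rfl⟩
      · rintro ⟨e1, e2⟩
        have f1 : σ.symm q.1 = ⟨a-1, hA1⟩ := Fin.ext e1
        have f2 : σ.symm q.2 = ⟨a, han⟩ := Fin.ext e2
        rw [← f1, ← f2, Equiv.apply_symm_apply, Equiv.apply_symm_apply]
        exact ⟨rfl, rfl⟩
    have hsymm1 : ((σ * adjT n a).symm q.1 : ℕ)
        = ((Equiv.swap (⟨a-1, hA1⟩ : Fin n) ⟨a, han⟩) (σ.symm q.1) : ℕ) := by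
      rw [mul_adjT_symm ha1 han hA1]
    have hsymm2 : ((σ * adjT n a).symm q.2 : ℕ)
        = ((Equiv.swap (⟨a-1, hA1⟩ : Fin n) ⟨a, han⟩) (σ.symm q.2) : ℕ) := by
      rw [mul_adjT_symm ha1 han hA1]
    have g1 : (σ.symm q.1 : ℕ) = a - 1 → (q.1 : ℕ) = (σ ⟨a-1, hA1⟩ : ℕ) := by
      intro h
      have f : σ.symm q.1 = ⟨a-1, hA1⟩ := Fin.ext h
      rw [← f, Equiv.apply_symm_apply]
    have g2 : (σ.symm q.1 : ℕ) = a → (q.1 : ℕ) = (σ ⟨a, han⟩ : ℕ) := by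
      intro h
      have f : σ.symm q.1 = ⟨a, han⟩ := Fin.ext h
      rw [← f, Equiv.apply_symm_apply]
    have g3 : (σ.symm q.2 : ℕ) = a - 1 → (q.2 : ℕ) = (σ ⟨a-1, hA1⟩ : ℕ) := by
      intro h
      have f : σ.symm q.2 = ⟨a-1, hA1⟩ := Fin.ext h
      rw [← f, Equiv.apply_symm_apply]
    have g4 : (σ.symm q.2 : ℕ) = a → (q.2 : ℕ) = (σ ⟨a, han⟩ : ℕ) := by
      intro h
      have f : σ.symm q.2 = ⟨a, han⟩ := Fin.ext h
      rw [← f, Equiv.apply_symm_apply]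
    have g1' : (q.1 : ℕ) = (σ ⟨a-1, hA1⟩ : ℕ) → (σ.symm q.1 : ℕ) = a - 1 := by
      intro h
      have f : q.1 = σ ⟨a-1, hA1⟩ := Fin.ext h
      rw [f, Equiv.symm_apply_apply]
    have g4' : (q.2 : ℕ) = (σ ⟨a, han⟩ : ℕ) → (σ.symm q.2 : ℕ) = a := by
      intro h
      have f : q.2 = σ ⟨a, han⟩ := Fin.ext h
      rw [f, Equiv.symm_apply_apply]
    rw [hpair]
    simp only [Fin.lt_iff_val_lt_val]
    rw [hsymm1, hsymm2, hswv, hswv]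
    split_ifs <;> omega
  rw [← invNum_symm (σ * adjT n a), ← invNum_symm σ]
  unfold invNum
  rw [hmain, Set.ncard_insert_of_notMem hnotmem (Set.toFinite _)]

lemma invNum_adjT_desc {σ : Equiv.Perm (Fin n)} {a : ℕ} (ha1 : 1 ≤ a) (han : a < n)
    (hdesc : (σ ⟨a, han⟩ : ℕ) < (σ ⟨a-1, by omega⟩ : ℕ)) :
    invNum σ = invNum (σ * adjT n a) + 1 := by
  have hA1 : a - 1 < n := by omega
  have hdesc' : (σ ⟨a, han⟩ : ℕ) < (σ ⟨a-1, hA1⟩ : ℕ) := hdesc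
  clear hdesc
  have hswsq : adjT n a * adjT n a = 1 := by
    rw [adjT_eq ha1 han hA1]; exact Equiv.swap_mul_self _ _
  have hback : (σ * adjT n a) * adjT n a = σ := by
    rw [mul_assoc, hswsq, mul_one]
  have h1 : ((σ * adjT n a) ⟨a-1, hA1⟩ : ℕ) = (σ ⟨a, han⟩ : ℕ) := by
    rw [mul_adjT_apply ha1 han hA1, Equiv.swap_apply_left]
  have h2 : ((σ * adjT n a) ⟨a, han⟩ : ℕ) = (σ ⟨a-1, hA1⟩ : ℕ) := by
    rw [mul_adjT_apply ha1 han hA1, Equiv.swap_apply_right]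
  have hASC : ((σ * adjT n a) ⟨a-1, hA1⟩ : ℕ) < ((σ * adjT n a) ⟨a, han⟩ : ℕ) := by
    rw [h1, h2]; exact hdesc'
  have hres := invNum_adjT_asc (σ := σ * adjT n a) ha1 han hASC
  rw [hback] at hres
  omega

lemma profile_zero : Profile n (fun _ => 0) := by
  constructor
  · intro a _
    exact ⟨le_rfl, by show (0:ℕ) ≤ 0 + 1; omega⟩
  · intro a _
    show (0:ℕ) ≤ n - a
    omega

lemma posC_zero {v : ℕ} (hv1 : 1 ≤ v) (hvn : v ≤ n) : posC n (fun _ => 0) v = v - 1 := by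
  unfold posC
  have hA : ((Finset.Icc 1 (n-1)).filter (fun d => (fun _ => (0:ℕ)) d + d < v)).card = v - 1 :=
    filter_card_eq (by omega) (fun d h1 h2 => by show (0:ℕ) + d < v; omega)
      (fun d h1 h2 => by show ¬((0:ℕ) + d < v); omega)
  have hB : ((Finset.Icc 1 (n-1)).filter (fun d => v ≤ (fun _ => (0:ℕ)) d)).card = 0 :=
    filter_card_eq (by omega) (fun d h1 h2 => by omega)
      (fun d h1 h2 => by show ¬(v ≤ (0:ℕ)); omega)
  omega

lemma invS_zero : InvS n 1 (fun _ => 0) := by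
  intro v
  rw [posC_zero (by omega) (by have := v.isLt; omega)]
  simp
  rfl

lemma posInv_zero : PosInv n (fun _ => 0) := by
  intro x y hx1 hxy hyn
  show posC n (fun _ => 0) y < posC n (fun _ => 0) x ↔ x ≤ 0
  rw [posC_zero (by omega) hyn, posC_zero hx1 (by omega)]
  omega

end SNaux
open SNaux in
set_option maxHeartbeats 2000000 in
/-- a sorting network is 132-avoiding iff it is a lattice word of type `sc_n`. -/
theorem sn_avoiding132_iff_latticeWord (n : ℕ) (w : List ℕ) (hw : IsSortingNetwork n w) :
    Avoiding132 n w ↔ LatticeWordSC n w := by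
  obtain ⟨hrange, hprod, hlen⟩ := hw
  have hrangek : ∀ k (hk : k < w.length), 1 ≤ w[k]'hk ∧ w[k]'hk < n := by
    intro k hk
    exact hrange _ (List.getElem_mem hk)
  have hperm0 : permOfWord n (w.take 0) = 1 := by
    simp [permOfWord]
  have hcnt0 : (fun i => (w.take 0).count i) = (fun _ => (0:ℕ)) := by
    funext i; simp
  have hperm_succ : ∀ k (hk : k < w.length),
      permOfWord n (w.take (k+1)) = permOfWord n (w.take k) * adjT n (w[k]'hk) := by
    intro k hk
    unfold permOfWord
    rw [List.take_succ, List.getElem?_eq_getElem hk, Option.toList_some, List.map_append,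
        List.prod_append, List.map_singleton, List.prod_singleton]
  have hcnt_succ : ∀ k (hk : k < w.length),
      (fun i => (w.take (k+1)).count i)
        = Function.update (fun i => (w.take k).count i) (w[k]'hk)
            ((w.take k).count (w[k]'hk) + 1) := by
    intro k hk
    funext i
    rw [List.take_succ, List.getElem?_eq_getElem hk]
    rcases eq_or_ne i (w[k]'hk) with rfl | hne
    · rw [Function.update_self, Option.toList_some, List.count_append]
      simp
    · rw [Function.update_of_ne hne, Option.toList_some, List.count_append]
      simp [hne, List.count_cons, Ne.symm hne]
  -- inversion-number bookkeeping
  have hIL : invNum (permOfWord n (w.take w.length)) = w.length := by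
    rw [List.take_length, hprod]
    exact hlen.symm
  have hstep2 : ∀ k (hk : k < w.length),
      invNum (permOfWord n (w.take (k+1))) = invNum (permOfWord n (w.take k)) + 1 ∨
      invNum (permOfWord n (w.take k)) = invNum (permOfWord n (w.take (k+1))) + 1 := by
    intro k hk
    have ha := hrangek k hk
    have hA1 : w[k]'hk - 1 < n := by omega
    have hneval : ((permOfWord n (w.take k)) ⟨w[k]'hk - 1, hA1⟩ : ℕ)
        ≠ ((permOfWord n (w.take k)) ⟨w[k]'hk, ha.2⟩ : ℕ) := by
      intro hcon
      have hcon' : (permOfWord n (w.take k)) ⟨w[k]'hk - 1, hA1⟩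
          = (permOfWord n (w.take k)) ⟨w[k]'hk, ha.2⟩ := Fin.ext hcon
      have := (permOfWord n (w.take k)).injective hcon'
      rw [Fin.mk.injEq] at this
      omega
    rcases Nat.lt_or_ge ((permOfWord n (w.take k)) ⟨w[k]'hk - 1, hA1⟩ : ℕ)
        ((permOfWord n (w.take k)) ⟨w[k]'hk, ha.2⟩ : ℕ) with hlt | hge
    · left
      rw [hperm_succ k hk]
      exact invNum_adjT_asc ha.1 ha.2 hlt
    · right
      rw [hperm_succ k hk]
      have hDESC : ((permOfWord n (w.take k)) ⟨w[k]'hk, ha.2⟩ : ℕ)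
          < ((permOfWord n (w.take k)) ⟨w[k]'hk - 1, hA1⟩ : ℕ) := by omega
      exact invNum_adjT_desc ha.1 ha.2 hDESC
  have hub : ∀ k, k ≤ w.length → invNum (permOfWord n (w.take k)) ≤ k := by
    intro k
    induction k with
    | zero =>
        intro _
        rw [hperm0, invNum_one]
    | succ k ih =>
        intro hk
        have h1 := hstep2 k (by omega)
        have h2 := ih (by omega)
        omega
  have hlb : ∀ j, j ≤ w.length →
      w.length ≤ invNum (permOfWord n (w.take (w.length - j))) + j := by
    intro j
    induction j with
    | zero => rw [Nat.sub_zero, hIL]; omega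
    | succ j ih =>
        intro hj
        have he : w.length - (j+1) + 1 = w.length - j := by omega
        have h2 := hstep2 (w.length - (j+1)) (by omega)
        rw [he] at h2
        have := ih (by omega)
        omega
  have hIk : ∀ k, k ≤ w.length → invNum (permOfWord n (w.take k)) = k := by
    intro k hk
    have h1 := hub k hk
    have h2 := hlb (w.length - k) (by omega)
    rw [show w.length - (w.length - k) = k by omega] at h2
    omega
  have hascall : ∀ k (hk : k < w.length),
      ((permOfWord n (w.take k)) ⟨w[k]'hk - 1, by have := hrangek k hk; omega⟩ : ℕ)
        < ((permOfWord n (w.take k)) ⟨w[k]'hk, (hrangek k hk).2⟩ : ℕ) := by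
    intro k hk
    have ha := hrangek k hk
    have hA1 : w[k]'hk - 1 < n := by omega
    have hneval : ((permOfWord n (w.take k)) ⟨w[k]'hk - 1, hA1⟩ : ℕ)
        ≠ ((permOfWord n (w.take k)) ⟨w[k]'hk, ha.2⟩ : ℕ) := by
      intro hcon
      have hcon' : (permOfWord n (w.take k)) ⟨w[k]'hk - 1, hA1⟩
          = (permOfWord n (w.take k)) ⟨w[k]'hk, ha.2⟩ := Fin.ext hcon
      have := (permOfWord n (w.take k)).injective hcon'
      rw [Fin.mk.injEq] at this
      omega
    rcases Nat.lt_or_ge ((permOfWord n (w.take k)) ⟨w[k]'hk - 1, hA1⟩ : ℕ)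
        ((permOfWord n (w.take k)) ⟨w[k]'hk, ha.2⟩ : ℕ) with hlt | hge
    · exact hlt
    · exfalso
      have hDESC : ((permOfWord n (w.take k)) ⟨w[k]'hk, ha.2⟩ : ℕ)
          < ((permOfWord n (w.take k)) ⟨w[k]'hk - 1, hA1⟩ : ℕ) := by omega
      have hdesc := invNum_adjT_desc ha.1 ha.2 hDESC
      rw [← hperm_succ k hk] at hdesc
      have e1 := hIk k (by omega)
      have e2 := hIk (k+1) (by omega)
      omega
  -- base invariant
  have hbase : Inv n (permOfWord n (w.take 0)) (fun i => (w.take 0).count i) := by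
    rw [hperm0, hcnt0]
    exact ⟨profile_zero, invS_zero, posInv_zero⟩
  constructor
  · -- Avoiding132 → LatticeWordSC
    intro hav
    have hInv : ∀ k, k ≤ w.length →
        Inv n (permOfWord n (w.take k)) (fun i => (w.take k).count i) := by
      intro k
      induction k with
      | zero => intro _; exact hbase
      | succ k ih =>
          intro hk
          have hk' : k < w.length := by omega
          obtain ⟨hc, hs, hp⟩ := ih (by omega)
          have ha := hrangek k hk'
          have hascK := hascall k hk'
          have heq := ascent_eq ⟨hc, hs, hp⟩ ha.1 ha.2 hascK
          have havK : Avoids132 (permOfWord n (w.take k) * adjT n (w[k]'hk')) := by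
            have h := hav (k+1) (by omega)
            rwa [hperm_succ k hk'] at h
          have hlow := step_132 hc hs hp ha.1 ha.2 hascK havK
          have hstep := step_update hc hs hp ha.1 ha.2 heq hlow
          rw [hperm_succ k hk', hcnt_succ k hk']
          exact hstep.2.2
    refine ⟨?_, ?_⟩
    · intro k i hi
      rcases le_or_gt k w.length with hk | hk
      · exact ((hInv k hk).1.1 i hi).1
      · rw [List.take_of_length_le (by omega)]
        have h := ((hInv w.length le_rfl).1.1 i hi).1
        rwa [List.take_length] at h
    · intro i
      obtain ⟨hc, hs, hp⟩ := hInv w.length le_rfl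
      split_ifs with hi
      · -- count = n - i
        have hσL : permOfWord n (w.take w.length) = Fin.revPerm := by
          rw [List.take_length, hprod]
        have hfin : ∀ v : ℕ, 1 ≤ v → v ≤ n →
            posC n (fun i => (w.take w.length).count i) v = n - v := by
          intro v hv1 hvn
          have hv' : v - 1 < n := by omega
          have h : ((permOfWord n (w.take w.length)).symm ⟨v-1, hv'⟩ : ℕ)
              = posC n (fun i => (w.take w.length).count i) v := by
            simpa [Nat.sub_add_cancel hv1] using hs ⟨v-1, hv'⟩
          rw [hσL, Fin.revPerm_symm] at h
          have hval : ((Fin.revPerm (⟨v-1, hv'⟩ : Fin n)) : ℕ) = n - v := by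
            show ((Fin.rev (⟨v-1, hv'⟩ : Fin n)) : ℕ) = n - v
            rw [Fin.val_rev]
            simp only [Fin.val_mk]
            omega
          omega
        have hle : (w.take w.length).count i ≤ n - i := hc.2 i hi.1
        have hge : n - i ≤ (w.take w.length).count i := by
          have h1 := hfin n (by omega) le_rfl
          have h2 := hfin (n-i) (by omega) (by omega)
          have h3 := (hp (n-i) n (by omega) (by omega) le_rfl).mp (by omega)
          rw [show n - (n - i) = i by omega] at h3
          exact h3
        rw [List.take_length] at hle hge
        omega
      · have hnot : i ∉ w := by
          intro hmem
          exact hi (hrange i hmem)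
        exact List.count_eq_zero.mpr hnot
  · -- LatticeWordSC → Avoiding132
    intro hlat
    have hInv : ∀ k, k ≤ w.length →
        Inv n (permOfWord n (w.take k)) (fun i => (w.take k).count i) := by
      intro k
      induction k with
      | zero => intro _; exact hbase
      | succ k ih =>
          intro hk
          have hk' : k < w.length := by omega
          obtain ⟨hc, hs, hp⟩ := ih (by omega)
          have ha := hrangek k hk'
          have hascK := hascall k hk'
          have heq := ascent_eq ⟨hc, hs, hp⟩ ha.1 ha.2 hascK
          have hlow : ∀ d, 1 ≤ d → d < w[k]'hk' →
              (w.take k).count (w[k]'hk') < (w.take k).count d := by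
            intro d hd1 hd2
            have hlat1 := hlat.1 (k+1) (w[k]'hk' - 1) (by omega)
            rw [show w[k]'hk' - 1 + 1 = w[k]'hk' by omega] at hlat1
            have e := hcnt_succ k hk'
            have c1 : (w.take (k+1)).count (w[k]'hk') = (w.take k).count (w[k]'hk') + 1 := by
              have := congrFun e (w[k]'hk')
              rwa [Function.update_self] at this
            have c2 : (w.take (k+1)).count (w[k]'hk' - 1) = (w.take k).count (w[k]'hk' - 1) := by
              have := congrFun e (w[k]'hk' - 1)
              rwa [Function.update_of_ne (by omega)] at this
            have hmono := cmono hc hd1 (by omega : d ≤ w[k]'hk' - 1)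
            omega
          have hstep := step_update hc hs hp ha.1 ha.2 heq hlow
          rw [hperm_succ k hk', hcnt_succ k hk']
          exact hstep.2.2
    intro k hk
    exact inv_avoids (hInv k hk)
end

section
/- Let Q be a standard Young tableau of staircase shape sc_n and w a word with EG(w) = Q and P(w) frozen. Then the weak descent set of w equals the descent set of Q: Des(w) = {i : w_i ≥ w_{i+1}} equals Des(Q) = {k : k+1 lies in a strictly lower row of Q than k}. -/
namespace EGaux

/-- F3': the bumped value is `y+1` (equal case) or some larger row element. -/
lemma insRow_bump {y : ℕ} : ∀ {l t : List ℕ} {v : ℕ}, insRow y l = (t, some v) →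
    (y ∈ l ∧ v = y + 1) ∨ (∃ u ∈ l, y < u ∧ v = u) := by
  intro l
  induction l with
  | nil => intro t v h; simp [insRow] at h
  | cons z zs ih =>
    intro t v h
    by_cases h1 : z < y
    · simp only [insRow, if_pos h1] at h
      obtain ⟨h2, h3⟩ := Prod.mk.injEq .. ▸ h
      rcases ih (t := (insRow y zs).1) (Prod.ext rfl h3) with ⟨hm, hv⟩ | ⟨u, hu, hlt, hv⟩
      · exact Or.inl ⟨List.mem_cons_of_mem _ hm, hv⟩
      · exact Or.inr ⟨u, List.mem_cons_of_mem _ hu, hlt, hv⟩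
    · by_cases h2 : z = y
      · subst h2
        simp [insRow, h1] at h
        exact Or.inl ⟨List.mem_cons_self, h.2.symm⟩
      · have h3 : ¬ z < y := h1
        simp [insRow, h1, h2] at h
        exact Or.inr ⟨z, List.mem_cons_self, by omega, h.2.symm⟩


/-- none case: appended at the end, all elements smaller. -/
lemma insRow_none : ∀ {l t : List ℕ} {x : ℕ}, insRow x l = (t, none) →
    t = l ++ [x] ∧ ∀ z ∈ l, z < x := by
  intro l
  induction l with
  | nil => intro t x h; simp [insRow] at h; simp [h.symm]
  | cons z zs ih =>
    intro t x h
    by_cases h1 : z < x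
    · simp only [insRow, if_pos h1] at h
      have h2 : (insRow x zs).2 = none := congrArg Prod.snd h
      have h3 : z :: (insRow x zs).1 = t := congrArg Prod.fst h
      obtain ⟨ht, hall⟩ := ih (Prod.ext rfl h2 : insRow x zs = ((insRow x zs).1, none))
      constructor
      · rw [← h3, ht]; rfl
      · intro u hu
        rcases List.mem_cons.mp hu with rfl | hu
        · exact h1
        · exact hall u hu
    · by_cases h2 : z = x
      · subst h2; simp [insRow, h1] at h
      · simp [insRow, h1, h2] at h

lemma insRow_all_lt {l : List ℕ} {x : ℕ} (h : ∀ z ∈ l, z < x) :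
    insRow x l = (l ++ [x], none) := by
  induction l with
  | nil => simp [insRow]
  | cons z zs ih =>
    have hz : z < x := h z (List.mem_cons_self)
    have := ih (fun u hu => h u (List.mem_cons_of_mem _ hu))
    simp [insRow, hz, this]

lemma insRow_some_of_le {l : List ℕ} {y : ℕ} (hz : ∃ z ∈ l, y ≤ z) :
    ∃ t v, insRow y l = (t, some v) := by
  induction l with
  | nil => simp at hz
  | cons z zs ih =>
    by_cases h1 : z < y
    · obtain ⟨u, hu, hyu⟩ := hz
      rcases List.mem_cons.mp hu with rfl | hu
      · omega
      · obtain ⟨t, v, htv⟩ := ih ⟨u, hu, hyu⟩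
        exact ⟨z :: t, v, by simp [insRow, h1, htv]⟩
    · by_cases h2 : z = y
      · exact ⟨z :: zs, z + 1, by simp [insRow, h1, h2]⟩
      · exact ⟨y :: zs, z, by simp [insRow, h1, h2]⟩

lemma insRow_mem : ∀ {l : List ℕ} {x u : ℕ}, u ∈ (insRow x l).1 → u = x ∨ u ∈ l := by
  intro l
  induction l with
  | nil => intro x u h; simp [insRow] at h; exact Or.inl h
  | cons z zs ih =>
    intro x u h
    by_cases h1 : z < x
    · simp only [insRow, if_pos h1] at h
      rcases List.mem_cons.mp h with rfl | h
      · exact Or.inr (List.mem_cons_self)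
      · rcases ih h with h | h
        · exact Or.inl h
        · exact Or.inr (List.mem_cons_of_mem _ h)
    · by_cases h2 : z = x
      · simp only [insRow, if_neg h1, if_pos h2] at h
        exact Or.inr h
      · simp only [insRow, if_neg h1, if_neg h2] at h
        rcases List.mem_cons.mp h with rfl | h
        · exact Or.inl rfl
        · exact Or.inr (List.mem_cons_of_mem _ h)

lemma insRow_sorted : ∀ {l : List ℕ} {x : ℕ}, l.Pairwise (· < ·) →
    (insRow x l).1.Pairwise (· < ·) := by
  intro l
  induction l with
  | nil => intro x _; simp [insRow]
  | cons z zs ih =>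
    intro x hs
    rw [List.pairwise_cons] at hs
    by_cases h1 : z < x
    · simp only [insRow, if_pos h1]
      rw [List.pairwise_cons]
      refine ⟨fun b hb => ?_, ih hs.2⟩
      rcases insRow_mem hb with rfl | hb
      · exact h1
      · exact hs.1 b hb
    · by_cases h2 : z = x
      · simp only [insRow, if_neg h1, if_pos h2]
        rw [List.pairwise_cons]; exact hs
      · simp only [insRow, if_neg h1, if_neg h2]
        rw [List.pairwise_cons]
        exact ⟨fun b hb => lt_of_le_of_lt (by omega) (hs.1 b hb), hs.2⟩

lemma insRow_length : ∀ {l t : List ℕ} {x v : ℕ}, insRow x l = (t, some v) →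
    t.length = l.length := by
  intro l
  induction l with
  | nil => intro t x v h; simp [insRow] at h
  | cons z zs ih =>
    intro t x v h
    by_cases h1 : z < x
    · simp only [insRow, if_pos h1] at h
      have h2 := congrArg Prod.snd h
      have h3 := congrArg Prod.fst h
      simp at h2 h3
      rw [← h3]
      simp [ih (Prod.ext rfl h2 : insRow x zs = ((insRow x zs).1, some v))]
    · by_cases h2 : z = x
      · simp only [insRow, if_neg h1, if_pos h2] at h
        have := congrArg Prod.fst h; simp at this; simp [← this]
      · simp only [insRow, if_neg h1, if_neg h2] at h
        have := congrArg Prod.fst h; simp at this; simp [← this]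


lemma bump_ge {l t : List ℕ} {y v : ℕ} (h : insRow y l = (t, some v)) : y + 1 ≤ v := by
  rcases insRow_bump h with ⟨_, rfl⟩ | ⟨u, _, hu, rfl⟩ <;> omega

lemma bump_gt_of_forall {l t : List ℕ} {y v z : ℕ} (h : insRow y l = (t, some v))
    (hall : ∀ u ∈ l, z < u) : z < v := by
  rcases insRow_bump h with ⟨hm, rfl⟩ | ⟨u, hm, hu, rfl⟩
  · have := hall _ hm; omega
  · exact hall _ hm

/-- L1 -/
lemma insRow_le : ∀ {l l1 : List ℕ} {x v1 : ℕ}, l.Pairwise (· < ·) →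
    insRow x l = (l1, some v1) → ∀ {y : ℕ}, y ≤ x →
    ∃ l2 v2, insRow y l1 = (l2, some v2) ∧ v2 ≤ v1 := by
  intro l
  induction l with
  | nil => intro l1 x v1 _ h; simp [insRow] at h
  | cons z zs ih =>
    intro l1 x v1 hs h y hyx
    rw [List.pairwise_cons] at hs
    by_cases h1 : z < x
    · simp only [insRow, if_pos h1] at h
      have h2 : (insRow x zs).2 = some v1 := congrArg Prod.snd h
      have h3 : z :: (insRow x zs).1 = l1 := congrArg Prod.fst h
      have hzs : insRow x zs = ((insRow x zs).1, some v1) := Prod.ext rfl h2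
      have hv1 : z + 1 ≤ v1 := by
        have := bump_gt_of_forall hzs hs.1; omega
      by_cases hy : z < y
      · obtain ⟨l2, v2, heq, hle⟩ := ih hs.2 hzs hyx
        exact ⟨z :: l2, v2, by simp [← h3, insRow, hy, heq], hle⟩
      · by_cases hy2 : z = y
        · exact ⟨l1, z + 1, by simp [← h3, insRow, hy, hy2], hv1⟩
        · exact ⟨y :: (insRow x zs).1, z, by simp [← h3, insRow, hy, hy2], by omega⟩
    · by_cases h2 : z = x
      · subst h2
        simp only [insRow, if_neg h1, if_pos rfl] at h
        injection h with hl hv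
        injection hv with hv
        subst hl; subst hv
        by_cases hy : z < y
        · omega
        · by_cases hy2 : z = y
          · exact ⟨z :: zs, z + 1, by simp [insRow, hy, hy2], by omega⟩
          · exact ⟨y :: zs, z, by simp [insRow, hy, hy2], by omega⟩
      · simp only [insRow, if_neg h1, if_neg h2] at h
        injection h with hl hv
        injection hv with hv
        subst hl; subst hv
        by_cases hy : x < y
        · omega
        · by_cases hy2 : x = y
          · exact ⟨x :: zs, x + 1, by simp [insRow, hy, hy2], by omega⟩
          · exact ⟨y :: zs, x, by simp [insRow, hy, hy2], by omega⟩

/-- L2 -/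
lemma insRow_gt : ∀ {l l1 l2 : List ℕ} {x y v1 v2 : ℕ}, l.Pairwise (· < ·) →
    insRow x l = (l1, some v1) → x < y → insRow y l1 = (l2, some v2) → v1 < v2 := by
  intro l
  induction l with
  | nil => intro l1 l2 x y v1 v2 _ h; simp [insRow] at h
  | cons z zs ih =>
    intro l1 l2 x y v1 v2 hs h hxy h'
    rw [List.pairwise_cons] at hs
    by_cases h1 : z < x
    · simp only [insRow, if_pos h1] at h
      have h2 : (insRow x zs).2 = some v1 := congrArg Prod.snd h
      have h3 : z :: (insRow x zs).1 = l1 := congrArg Prod.fst h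
      have hzs : insRow x zs = ((insRow x zs).1, some v1) := Prod.ext rfl h2
      have hzy : z < y := by omega
      rw [← h3] at h'
      simp only [insRow, if_pos hzy] at h'
      have h4 : (insRow y (insRow x zs).1).2 = some v2 := congrArg Prod.snd h'
      exact ih hs.2 hzs hxy (Prod.ext rfl h4)
    · by_cases h2 : z = x
      · subst h2
        simp only [insRow, if_neg h1, if_pos rfl] at h
        injection h with hl hv
        injection hv with hv
        subst hv
        rw [← hl] at h'
        simp only [insRow, if_pos hxy] at h'
        have h4 : (insRow y zs).2 = some v2 := congrArg Prod.snd h'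
        have := bump_ge (Prod.ext rfl h4 : insRow y zs = ((insRow y zs).1, some v2))
        omega
      · simp only [insRow, if_neg h1, if_neg h2] at h
        injection h with hl hv
        injection hv with hv
        subst hv
        rw [← hl] at h'
        simp only [insRow, if_pos hxy] at h'
        have h4 : (insRow y zs).2 = some v2 := congrArg Prod.snd h'
        have := bump_gt_of_forall (Prod.ext rfl h4 : insRow y zs = ((insRow y zs).1, some v2)) hs.1
        omega


/-- Row index of the new cell created by `insTab x P`. -/
def bumpRow (x : ℕ) : List (List ℕ) → ℕ
  | [] => 0
  | r :: rs =>
    match (insRow x r).2 with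
    | none => 0
    | some y => bumpRow y rs + 1

lemma bumpRow_le : ∀ (P : List (List ℕ)) (x : ℕ), bumpRow x P ≤ P.length := by
  intro P
  induction P with
  | nil => intro x; simp [bumpRow]
  | cons r rs ih =>
    intro x
    rw [bumpRow]
    rcases h : (insRow x r).2 with _ | y
    · simp
    · simpa using Nat.succ_le_succ (ih y)

lemma insTab_sorted : ∀ {P : List (List ℕ)} {x : ℕ}, (∀ r ∈ P, r.Pairwise (· < ·)) →
    ∀ r ∈ insTab x P, r.Pairwise (· < ·) := by
  intro P
  induction P with
  | nil =>
    intro x _ r hr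
    simp [insTab] at hr
    simp [hr]
  | cons r0 rs ih =>
    intro x hP r hr
    rw [insTab] at hr
    rcases h : (insRow x r0).2 with _ | y <;> rw [h] at hr
    · rcases List.mem_cons.mp hr with rfl | hr
      · exact insRow_sorted (hP _ (List.mem_cons_self))
      · exact hP _ (List.mem_cons_of_mem _ hr)
    · rcases List.mem_cons.mp hr with rfl | hr
      · exact insRow_sorted (hP _ (List.mem_cons_self))
      · exact ih (fun s hs => hP _ (List.mem_cons_of_mem _ hs)) _ hr

/-- keyA: a weak descent pushes the new cell strictly lower. -/
lemma bumpRow_lt : ∀ {P : List (List ℕ)}, (∀ r ∈ P, r.Pairwise (· < ·)) →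
    ∀ {x y : ℕ}, y ≤ x → bumpRow x P < bumpRow y (insTab x P) := by
  intro P
  induction P with
  | nil =>
    intro _ x y hyx
    have h2 : ∃ v, (insRow y [x]).2 = some v := by
      by_cases h : y = x
      · subst h; simp [insRow]
      · have hn : ¬ x < y := by omega
        simp [insRow, hn, show ¬x = y by omega]
    obtain ⟨v, hv⟩ := h2
    simp [bumpRow, insTab, hv]
  | cons r rs ih =>
    intro hP x y hyx
    have hr : r.Pairwise (· < ·) := hP _ (List.mem_cons_self)
    have hrs : ∀ s ∈ rs, s.Pairwise (· < ·) := fun s hs => hP _ (List.mem_cons_of_mem _ hs)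
    rw [insTab, bumpRow]
    rcases h : (insRow x r).2 with _ | v1
    · -- appended at row 0; y ≤ x must bump
      obtain ⟨ht, -⟩ := insRow_none (Prod.ext rfl h : insRow x r = ((insRow x r).1, none))
      obtain ⟨t2, v2, heq⟩ := insRow_some_of_le (l := (insRow x r).1)
        ⟨x, by rw [ht]; simp, hyx⟩ (y := y)
      have heq2 : (insRow y (insRow x r).1).2 = some v2 := by rw [heq]
      simp only [bumpRow, heq2]
      omega
    · obtain ⟨l2, v2, heq, hle⟩ := insRow_le hr
        (Prod.ext rfl h : insRow x r = ((insRow x r).1, some v1)) hyx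
      simp only [bumpRow, heq]
      have := ih hrs hle
      omega

/-- keyB: a strict ascent keeps the new cell weakly higher. -/
lemma bumpRow_le' : ∀ {P : List (List ℕ)}, (∀ r ∈ P, r.Pairwise (· < ·)) →
    ∀ {x y : ℕ}, x < y → bumpRow y (insTab x P) ≤ bumpRow x P := by
  intro P
  induction P with
  | nil =>
    intro _ x y hxy
    have hv : (insRow y [x]).2 = none := by simp [insRow, hxy]
    simp [bumpRow, insTab, hv]
  | cons r rs ih =>
    intro hP x y hxy
    have hr : r.Pairwise (· < ·) := hP _ (List.mem_cons_self)
    have hrs : ∀ s ∈ rs, s.Pairwise (· < ·) := fun s hs => hP _ (List.mem_cons_of_mem _ hs)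
    rw [insTab, bumpRow]
    rcases h : (insRow x r).2 with _ | v1
    · obtain ⟨ht, hall⟩ := insRow_none (Prod.ext rfl h : insRow x r = ((insRow x r).1, none))
      have : insRow y (insRow x r).1 = ((insRow x r).1 ++ [y], none) := by
        apply insRow_all_lt
        intro z hz
        rw [ht] at hz
        rcases List.mem_append.mp hz with hz | hz
        · exact lt_trans (hall z hz) hxy
        · simp at hz; omega
      simp [bumpRow, this]
    · rcases h2 : (insRow y (insRow x r).1).2 with _ | v2
      · simp [bumpRow, h2]
      · simp only [bumpRow, h2]
        have hv := insRow_gt hr (Prod.ext rfl h : insRow x r = ((insRow x r).1, some v1)) hxy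
          (Prod.ext rfl h2 : insRow y (insRow x r).1 = ((insRow y (insRow x r).1).1, some v2))
        have := ih hrs hv
        omega


/-- `updRow m q b` appends `m` at the end of row `b` of `q` (new row if `b = q.length`). -/
def updRow (m : ℕ) : List (List ℕ) → ℕ → List (List ℕ)
  | [], _ => [[m]]
  | r :: rs, 0 => (r ++ [m]) :: rs
  | r :: rs, b + 1 => r :: updRow m rs b

def updLen : List ℕ → ℕ → List ℕ
  | [], _ => [1]
  | a :: as, 0 => (a + 1) :: as
  | a :: as, b + 1 => a :: updLen as b

lemma insTab_shape : ∀ (p : List (List ℕ)) (x : ℕ),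
    (insTab x p).map List.length = updLen (p.map List.length) (bumpRow x p) := by
  intro p
  induction p with
  | nil => intro x; simp [insTab, bumpRow, updLen]
  | cons r rs ih =>
    intro x
    rw [insTab, bumpRow]
    rcases h : (insRow x r).2 with _ | v
    · obtain ⟨ht, -⟩ := insRow_none (Prod.ext rfl h : insRow x r = ((insRow x r).1, none))
      simp [ht, updLen]
    · have hl := insRow_length (Prod.ext rfl h : insRow x r = ((insRow x r).1, some v))
      simp [updLen, hl, ih v]

lemma updRow_shape : ∀ (q : List (List ℕ)) (m b : ℕ),
    (updRow m q b).map List.length = updLen (q.map List.length) b := by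
  intro q
  induction q with
  | nil => intro m b; cases b <;> simp [updRow, updLen]
  | cons r rs ih =>
    intro m b
    cases b with
    | zero => simp [updRow, updLen]
    | succ b => simp [updRow, updLen, ih]

lemma recordCell_eq : ∀ (p q : List (List ℕ)) (x m : ℕ),
    q.map List.length = p.map List.length →
    recordCell m q (insTab x p) = updRow m q (bumpRow x p) := by
  intro p
  induction p with
  | nil =>
    intro q x m hq
    have : q = [] := by
      cases q with
      | nil => rfl
      | cons a as => simp at hq
    subst this
    simp [insTab, recordCell, bumpRow, updRow]
  | cons r rs ih =>
    intro q x m hq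
    rcases q with _ | ⟨q0, qs⟩
    · simp at hq
    · simp only [List.map_cons, List.cons.injEq] at hq
      rw [insTab, bumpRow]
      rcases h : (insRow x r).2 with _ | v
      · obtain ⟨ht, -⟩ := insRow_none (Prod.ext rfl h : insRow x r = ((insRow x r).1, none))
        have hlt : q0.length < (insRow x r).1.length := by rw [ht]; simp; omega
        simp [recordCell, hlt, updRow]
      · have hl := insRow_length (Prod.ext rfl h : insRow x r = ((insRow x r).1, some v))
        have hnlt : ¬ q0.length < (insRow x r).1.length := by omega
        simp only [recordCell, if_neg hnlt, updRow]
        rw [ih qs v m hq.2]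


lemma Ptab_snoc (u : List ℕ) (x : ℕ) : Ptab (u ++ [x]) = insTab x (Ptab u) := by
  simp [Ptab, List.foldl_append]

lemma Ptab_sorted : ∀ (u : List ℕ), ∀ r ∈ Ptab u, r.Pairwise (· < ·) := by
  intro u
  induction u using List.reverseRecOn with
  | nil => simp [Ptab]
  | append_singleton u x ih =>
    rw [Ptab_snoc]
    exact insTab_sorted ih

lemma Qtab_fst : ∀ (u : List ℕ) (P Q : List (List ℕ)),
    (u.foldl (fun pq x =>
      let P' := insTab x pq.1
      (P', recordCell (pq.2.flatten.length + 1) pq.2 P')) (P, Q)).1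
      = u.foldl (fun t x => insTab x t) P := by
  intro u
  induction u with
  | nil => intro P Q; rfl
  | cons a as ih => intro P Q; exact ih _ _

lemma Qtab_snoc (u : List ℕ) (x : ℕ) :
    Qtab (u ++ [x]) = recordCell ((Qtab u).flatten.length + 1) (Qtab u) (insTab x (Ptab u)) := by
  rw [Qtab, List.foldl_append]
  exact congrArg (fun P => recordCell ((Qtab u).flatten.length + 1) (Qtab u) (insTab x P))
    (Qtab_fst u [] [])

lemma Qtab_shape : ∀ (u : List ℕ),
    (Qtab u).map List.length = (Ptab u).map List.length := by
  intro u
  induction u using List.reverseRecOn with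
  | nil => simp [Qtab, Ptab]
  | append_singleton u x ih =>
    rw [Qtab_snoc, Ptab_snoc, recordCell_eq _ _ _ _ ih, updRow_shape, insTab_shape, ih]

lemma Qtab_snoc' (u : List ℕ) (x : ℕ) :
    Qtab (u ++ [x]) = updRow ((Qtab u).flatten.length + 1) (Qtab u) (bumpRow x (Ptab u)) := by
  rw [Qtab_snoc, recordCell_eq _ _ _ _ (Qtab_shape u)]

lemma updRow_flatten_len : ∀ (q : List (List ℕ)) (m b : ℕ),
    (updRow m q b).flatten.length = q.flatten.length + 1 := by
  intro q
  induction q with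
  | nil => intro m b; cases b <;> simp [updRow]
  | cons r rs ih =>
    intro m b
    cases b with
    | zero => simp [updRow]; omega
    | succ b => simp [updRow, ih]; omega

lemma Qtab_flatten_len : ∀ (u : List ℕ), (Qtab u).flatten.length = u.length := by
  intro u
  induction u using List.reverseRecOn with
  | nil => simp [Qtab]
  | append_singleton u x ih => rw [Qtab_snoc', updRow_flatten_len, ih]; simp

lemma Qtab_snoc'' (u : List ℕ) (x : ℕ) :
    Qtab (u ++ [x]) = updRow (u.length + 1) (Qtab u) (bumpRow x (Ptab u)) := by
  rw [Qtab_snoc', Qtab_flatten_len]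

lemma mem_updRow : ∀ {q : List (List ℕ)} {i k : ℕ} (m b : ℕ),
    k ∈ q.getD i [] → k ∈ (updRow m q b).getD i [] := by
  intro q
  induction q with
  | nil => intro i k m b h; simp at h
  | cons r rs ih =>
    intro i k m b h
    cases b with
    | zero =>
      cases i with
      | zero => simp only [updRow, List.getD] at h ⊢; simp at h ⊢; tauto
      | succ i => simpa [updRow] using h
    | succ b =>
      cases i with
      | zero => simpa [updRow] using h
      | succ i =>
        simp only [updRow]
        have := ih m b (i := i) (k := k) (by simpa using h)
        simpa using this

lemma self_mem_updRow : ∀ {q : List (List ℕ)} {b : ℕ} (m : ℕ), b ≤ q.length →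
    m ∈ (updRow m q b).getD b [] := by
  intro q
  induction q with
  | nil =>
    intro b m hb
    have hb0 : b = 0 := by simpa using hb
    subst hb0; simp [updRow]
  | cons r rs ih =>
    intro b m hb
    cases b with
    | zero => simp [updRow]
    | succ b =>
      simp only [updRow]
      have := ih m (b := b) (by simpa using hb)
      simpa using this

lemma mem_Qtab_append : ∀ (v u : List ℕ) {i k : ℕ},
    k ∈ (Qtab u).getD i [] → k ∈ (Qtab (u ++ v)).getD i [] := by
  intro v
  induction v using List.reverseRecOn with
  | nil => intro u i k h; simpa using h
  | append_singleton v x ih =>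
    intro u i k h
    rw [← List.append_assoc, Qtab_snoc'']
    exact mem_updRow _ _ (ih u h)


lemma mem_flatten_of_getD : ∀ {q : List (List ℕ)} {i k : ℕ}, k ∈ q.getD i [] → k ∈ q.flatten := by
  intro q
  induction q with
  | nil => intro i k h; simp at h
  | cons r rs ih =>
    intro i k h
    cases i with
    | zero => simp at h ⊢; exact Or.inl h
    | succ i =>
      simp only [List.flatten_cons, List.mem_append]
      exact Or.inr (ih (by simpa using h))

lemma row_unique : ∀ {q : List (List ℕ)}, q.flatten.Nodup →
    ∀ {i j k : ℕ}, k ∈ q.getD i [] → k ∈ q.getD j [] → i = j := by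
  intro q
  induction q with
  | nil => intro _ i j k h; simp at h
  | cons r rs ih =>
    intro hnd i j k hi hj
    rw [List.flatten_cons, List.nodup_append] at hnd
    cases i with
    | zero =>
      cases j with
      | zero => rfl
      | succ j =>
        exact absurd rfl (hnd.2.2 k (by simpa using hi) k (mem_flatten_of_getD (by simpa using hj)))
    | succ i =>
      cases j with
      | zero =>
        exact absurd rfl (hnd.2.2 k (by simpa using hj) k (mem_flatten_of_getD (by simpa using hi)))
      | succ j =>
        have := ih hnd.2.1 (i := i) (j := j) (k := k) (by simpa using hi) (by simpa using hj)
        omega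

lemma take_snoc {w : List ℕ} {k : ℕ} (h1 : 1 ≤ k) (h2 : k ≤ w.length) :
    w.take k = w.take (k - 1) ++ [w.getD (k - 1) 0] := by
  have h3 : k - 1 < w.length := by omega
  conv_lhs => rw [show k = (k - 1) + 1 by omega]
  rw [List.take_succ, List.getElem?_eq_getElem h3, List.getD_eq_getElem w 0 h3]
  rfl

/-- The (0-indexed) row in which the `k`-th letter's new cell is created. -/
def rrow (w : List ℕ) (k : ℕ) : ℕ :=
  bumpRow (w.getD (k - 1) 0) (Ptab (w.take (k - 1)))

lemma G3 (w : List ℕ) (k : ℕ) (h1 : 1 ≤ k) (h2 : k ≤ w.length) :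
    k ∈ (Qtab w).getD (rrow w k) [] := by
  have hk := take_snoc h1 h2
  have hlen : (w.take (k - 1)).length = k - 1 := by simp; omega
  have hQ : Qtab (w.take k) = updRow k (Qtab (w.take (k - 1))) (rrow w k) := by
    rw [hk, Qtab_snoc'', hlen, show k - 1 + 1 = k by omega]; rfl
  have hlen2 : (Qtab (w.take (k - 1))).length = (Ptab (w.take (k - 1))).length := by
    have := congrArg List.length (Qtab_shape (w.take (k - 1))); simpa using this
  have hb : rrow w k ≤ (Qtab (w.take (k - 1))).length := by
    have := bumpRow_le (Ptab (w.take (k - 1))) (w.getD (k - 1) 0)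
    rw [rrow]; omega
  have hmem : k ∈ (Qtab (w.take k)).getD (rrow w k) [] := by
    rw [hQ]; exact self_mem_updRow k hb
  have := mem_Qtab_append (w.drop k) (w.take k) hmem
  rwa [List.take_append_drop] at this

end EGaux

/-- for a staircase standard Young tableau `Q` and any word `w` with
`EG(w) = Q` and `P(w)` frozen, the set of (1-indexed) weak descents of `w` equals the
descent set of `Q`. -/
theorem descents_eq (n : ℕ) (Q : List (List ℕ)) (w : List ℕ)
    (hQ : IsStandard Q) (hsc : StaircaseShape n Q)
    (hEG : Qtab w = Q) (hfr : Frozen (Ptab w)) :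
    {i : ℕ | 1 ≤ i ∧ i < w.length ∧ w.getD i 0 ≤ w.getD (i - 1) 0}
      = {k : ℕ | ∃ i i' : ℕ, i < i' ∧ k ∈ Q.getD i [] ∧ k + 1 ∈ Q.getD i' []} := by
  classical
  obtain ⟨hsh, hrow, hcol, hperm⟩ := hQ
  have hN : Q.flatten.length = w.length := by rw [← hEG]; exact EGaux.Qtab_flatten_len w
  have hnd : Q.flatten.Nodup := hperm.nodup_iff.mpr (List.nodup_range' (s := _) (n := _))
  ext k
  simp only [Set.mem_setOf_eq]
  constructor
  · rintro ⟨hk1, hk2, hk3⟩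
    have hP1 : Ptab (w.take k) = insTab (w.getD (k - 1) 0) (Ptab (w.take (k - 1))) := by
      rw [EGaux.take_snoc hk1 (le_of_lt hk2), EGaux.Ptab_snoc]
    have hcmp := EGaux.bumpRow_lt (EGaux.Ptab_sorted (w.take (k - 1)))
      (x := w.getD (k - 1) 0) (y := w.getD k 0) hk3
    rw [← hP1] at hcmp
    refine ⟨EGaux.rrow w k, EGaux.rrow w (k + 1), ?_, ?_, ?_⟩
    · simpa [EGaux.rrow] using hcmp
    · rw [← hEG]; exact EGaux.G3 w k hk1 (by omega)
    · rw [← hEG]; exact EGaux.G3 w (k + 1) (by omega) (by omega)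
  · rintro ⟨i, i', hii, hki, hki'⟩
    have hkmem := hperm.mem_iff.mp (EGaux.mem_flatten_of_getD hki)
    have hk1mem := hperm.mem_iff.mp (EGaux.mem_flatten_of_getD hki')
    rw [List.mem_range'_1] at hkmem hk1mem
    have hk1 : 1 ≤ k := hkmem.1
    have hk2 : k < w.length := by omega
    have hi : i = EGaux.rrow w k :=
      EGaux.row_unique hnd hki (by rw [← hEG]; exact EGaux.G3 w k hk1 (by omega))
    have hi' : i' = EGaux.rrow w (k + 1) :=
      EGaux.row_unique hnd hki' (by rw [← hEG]; exact EGaux.G3 w (k + 1) (by omega) (by omega))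
    refine ⟨hk1, hk2, ?_⟩
    by_contra hcon
    push_neg at hcon
    have hP1 : Ptab (w.take k) = insTab (w.getD (k - 1) 0) (Ptab (w.take (k - 1))) := by
      rw [EGaux.take_snoc hk1 (le_of_lt hk2), EGaux.Ptab_snoc]
    have hcmp := EGaux.bumpRow_le' (EGaux.Ptab_sorted (w.take (k - 1)))
      (x := w.getD (k - 1) 0) (y := w.getD k 0) hcon
    rw [← hP1] at hcmp
    have : EGaux.rrow w (k + 1) ≤ EGaux.rrow w k := by simpa [EGaux.rrow] using hcmp
    omega
end

section
/- For n ≥ 4, there is no palindromic reduced word of the reverse permutation in S_n; equivalently, every reduced word w with w = w^rev (the reversal of w) is a reduced word of a permutation of the form s_i s_{i+1} ··· s_{j-1} s_j s_{j-1} ··· s_{i+1} s_i for some i ≤ j, which is not the reverse permutation for n ≥ 4. -/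
lemma permOfWord_append (n : ℕ) (u v : List ℕ) :
    permOfWord n (u ++ v) = permOfWord n u * permOfWord n v := by
  simp [permOfWord]

lemma permOfWord_cons (n : ℕ) (a : ℕ) (w : List ℕ) :
    permOfWord n (a :: w) = adjT n a * permOfWord n w := by
  simp [permOfWord]

lemma adjT_mul_self (n a : ℕ) : adjT n a * adjT n a = 1 := by
  unfold adjT
  split
  · exact Equiv.swap_mul_self _ _
  · simp

lemma permOfWord_reverse (n : ℕ) (w : List ℕ) :
    permOfWord n w.reverse = (permOfWord n w)⁻¹ := by
  induction w with
  | nil => simp [permOfWord]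
  | cons a w ih =>
    rw [List.reverse_cons, permOfWord_append, ih,
      show permOfWord n (a :: w) = adjT n a * permOfWord n w from permOfWord_cons n a w,
      mul_inv_rev]
    congr 1
    rw [show permOfWord n [a] = adjT n a from by simp [permOfWord], eq_comm,
      inv_eq_iff_mul_eq_one, adjT_mul_self]

lemma palindrome_decomp : ∀ (m : ℕ) (w : List ℕ), w.length ≤ m → w.reverse = w →
    w = [] ∨ (∃ u : List ℕ, w = u ++ u.reverse) ∨
      ∃ (u : List ℕ) (a : ℕ), w = u ++ a :: u.reverse := by
  intro m
  induction m with
  | zero =>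
    intro w hw _
    left
    exact List.eq_nil_of_length_eq_zero (Nat.le_zero.mp hw)
  | succ m ih =>
    intro w hw hrev
    match w with
    | [] => exact Or.inl rfl
    | [a] => exact Or.inr (Or.inr ⟨[], a, rfl⟩)
    | a :: b :: t =>
      have hl : (b :: t) ≠ [] := by simp
      obtain ⟨v, c, hvc⟩ : ∃ v c, b :: t = v ++ [c] := by
        refine ⟨(b :: t).dropLast, (b :: t).getLast hl, ?_⟩
        exact (List.dropLast_append_getLast hl).symm
      rw [hvc] at hrev ⊢
      have hrev' : c :: (v.reverse ++ [a]) = a :: (v ++ [c]) := by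
        simpa using hrev
      have hca : c = a := (List.cons.injEq _ _ _ _ ▸ hrev').1
      have hv : v.reverse = v := by
        have h2 := (List.cons.injEq _ _ _ _ ▸ hrev').2
        rw [hca] at h2
        exact List.append_cancel_right h2
      have hvlen : v.length ≤ m := by
        have h1 := congrArg List.length hvc
        simp at h1
        have h2 := hw
        simp at h2
        omega
      rcases ih v hvlen hv with h | ⟨u, hu⟩ | ⟨u, x, hu⟩
      · refine Or.inr (Or.inl ⟨[a], ?_⟩)
        rw [h, hca]
        simp
      · refine Or.inr (Or.inl ⟨a :: u, ?_⟩)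
        rw [hca, hu]; simp
      · refine Or.inr (Or.inr ⟨a :: u, x, ?_⟩)
        rw [hca, hu]; simp

lemma invNum_one (n : ℕ) : invNum (1 : Equiv.Perm (Fin n)) = 0 := by
  have : invSet (1 : Equiv.Perm (Fin n)) = ∅ := by
    ext p
    simp only [invSet, Set.mem_setOf_eq, Set.mem_empty_iff_false, iff_false, not_and]
    intro h1
    simp only [Equiv.Perm.coe_one, id_eq]
    exact not_lt.mpr h1.le
  rw [invNum, this, Set.ncard_empty]

/-- key structural lemma: a nonempty palindromic word of valid letters whose length equals
its inversion number has a permutation that is a transposition. -/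
lemma palindrome_is_swap (n : ℕ) (w : List ℕ) (hne : w ≠ []) (hpal : w.reverse = w)
    (hlet : ∀ a ∈ w, 1 ≤ a ∧ a < n) (hlen : w.length = invNum (permOfWord n w)) :
    ∃ p q : Fin n, p < q ∧ permOfWord n w = Equiv.swap p q := by
  rcases palindrome_decomp w.length w le_rfl hpal with h | ⟨u, hu⟩ | ⟨u, a, hu⟩
  · exact absurd h hne
  · exfalso
    have h1 : permOfWord n w = 1 := by
      rw [hu, permOfWord_append, permOfWord_reverse, mul_inv_cancel]
    rw [h1, invNum_one] at hlen
    exact hne (List.eq_nil_of_length_eq_zero hlen)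
  · have ha : 1 ≤ a ∧ a < n := hlet a (by rw [hu]; simp)
    have hadj : adjT n a = Equiv.swap ⟨a - 1, by omega⟩ ⟨a, ha.2⟩ := by
      rw [adjT, dif_pos ha]
    set τ := permOfWord n u with hτ
    have hσ : permOfWord n w = τ * adjT n a * τ⁻¹ := by
      rw [hu, permOfWord_append, permOfWord_cons, permOfWord_reverse, ← hτ, mul_assoc]
    rw [hadj, ← Equiv.swap_apply_apply] at hσ
    set x := τ ⟨a - 1, by omega⟩
    set y := τ ⟨a, ha.2⟩
    have hxy : x ≠ y := by
      intro h
      have := τ.injective h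
      have := Fin.mk.injEq .. ▸ this
      omega
    rcases lt_or_gt_of_ne hxy with h | h
    · exact ⟨x, y, h, hσ⟩
    · exact ⟨y, x, h, by rw [hσ, Equiv.swap_comm]⟩

/-- the hook word `s_{p+1} ⋯ s_{p+d+1} ⋯ s_{p+1}` is the transposition `(p, p+d+1)`. -/
lemma permOfWord_hook (n : ℕ) : ∀ (d p : ℕ) (h : p + d + 1 < n),
    permOfWord n (List.range' (p + 1) (d + 1) ++ (List.range' (p + 1) d).reverse)
      = Equiv.swap ⟨p, by omega⟩ ⟨p + d + 1, h⟩ := by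
  intro d
  induction d with
  | zero =>
    intro p h
    have : permOfWord n (List.range' (p + 1) 1 ++ (List.range' (p + 1) 0).reverse)
        = adjT n (p + 1) := by
      simp [permOfWord]
    rw [this, adjT, dif_pos ⟨by omega, by omega⟩]
    congr 1
  | succ d ih =>
    intro p h
    have h' : (p + 1) + d + 1 < n := by omega
    have hw : List.range' (p + 1) (d + 1 + 1) ++ (List.range' (p + 1) (d + 1)).reverse
        = (p + 1) :: ((List.range' (p + 2) (d + 1) ++ (List.range' (p + 2) d).reverse)
            ++ [p + 1]) := by
      simp [List.range'_succ]
    rw [hw, permOfWord_cons, permOfWord_append, ih (p + 1) h']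
    have hone : permOfWord n [p + 1] = adjT n (p + 1) := by simp [permOfWord]
    rw [hone]
    have hadj : adjT n (p + 1) = Equiv.swap (⟨p, by omega⟩ : Fin n) ⟨p + 1, by omega⟩ := by
      rw [adjT, dif_pos ⟨by omega, by omega⟩]
      congr 1
    rw [hadj]
    set s : Equiv.Perm (Fin n) := Equiv.swap (⟨p, by omega⟩ : Fin n) ⟨p + 1, by omega⟩ with hs
    have hsinv : s⁻¹ = s := Equiv.swap_inv _ _
    have : s * Equiv.swap (⟨p + 1, by omega⟩ : Fin n) ⟨p + 1 + d + 1, h'⟩ * s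
        = Equiv.swap (s ⟨p + 1, by omega⟩) (s ⟨p + 1 + d + 1, h'⟩) := by
      rw [Equiv.swap_apply_apply, hsinv]
    rw [← mul_assoc, this]
    have h1 : s ⟨p + 1, by omega⟩ = ⟨p, by omega⟩ := Equiv.swap_apply_right _ _
    have h2 : s (⟨p + 1 + d + 1, h'⟩ : Fin n) = ⟨p + 1 + d + 1, h'⟩ :=
      Equiv.swap_apply_of_ne_of_ne (by simp [Fin.ext_iff]; omega) (by simp [Fin.ext_iff]; omega)
    rw [h1, h2]
    congr 1
    simp [Fin.ext_iff]; omega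

/-- every nonempty palindromic reduced word is a reduced word of a
permutation of the form `s_i s_{i+1} ⋯ s_{j-1} s_j s_{j-1} ⋯ s_{i+1} s_i`; consequently,
for `n ≥ 4` there is no palindromic reduced word of the reverse permutation in `S_n`. -/
theorem no_palindromic_reduced_word (n : ℕ) :
    (∀ w : List ℕ, w ≠ [] → w.reverse = w → (∀ a ∈ w, 1 ≤ a ∧ a < n) →
        w.length = invNum (permOfWord n w) →
        ∃ i j : ℕ, 1 ≤ i ∧ i ≤ j ∧ j ≤ n - 1 ∧
          permOfWord n w
            = permOfWord n (List.range' i (j - i + 1) ++ (List.range' i (j - i)).reverse)) ∧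
    (4 ≤ n → ¬ ∃ w : List ℕ, IsReducedWord n Fin.revPerm w ∧ w.reverse = w) := by
  constructor
  · intro w hne hpal hlet hlen
    obtain ⟨p, q, hpq, hσ⟩ := palindrome_is_swap n w hne hpal hlet hlen
    refine ⟨(p : ℕ) + 1, (q : ℕ), by omega, by omega, by omega, ?_⟩
    have hd : (p : ℕ) + ((q : ℕ) - (p : ℕ) - 1) + 1 < n := by
      have := q.isLt; omega
    have := permOfWord_hook n ((q : ℕ) - (p : ℕ) - 1) (p : ℕ) hd
    have he1 : (q : ℕ) - ((p : ℕ) + 1) + 1 = (q : ℕ) - (p : ℕ) - 1 + 1 := by omega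
    have he2 : (q : ℕ) - ((p : ℕ) + 1) = (q : ℕ) - (p : ℕ) - 1 := by omega
    rw [he1, he2, this, hσ]
    congr 1 <;> simp [Fin.ext_iff] <;> omega
  · rintro hn ⟨w, ⟨hlet, hperm, hlen⟩, hpal⟩
    have hne : w ≠ [] := by
      intro h
      subst h
      have h1 : permOfWord n [] = 1 := by simp [permOfWord]
      rw [h1] at hperm
      have := congrArg (fun σ : Equiv.Perm (Fin n) => σ ⟨0, by omega⟩) hperm
      simp only [Equiv.Perm.coe_one, id_eq] at this
      rw [Fin.revPerm_apply] at this
      have := congrArg Fin.val this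
      rw [Fin.val_rev] at this
      simp at this
      omega
    obtain ⟨p, q, hpq, hσ⟩ := palindrome_is_swap n w hne hpal hlet (by rw [hperm]; exact hlen)
    rw [hperm] at hσ
    have hmove : ∀ z : Fin n, Fin.revPerm z ≠ z → z = p ∨ z = q := by
      intro z hz
      rw [hσ] at hz
      by_contra hc
      push_neg at hc
      exact hz (Equiv.swap_apply_of_ne_of_ne hc.1 hc.2)
    have m0 : (⟨0, by omega⟩ : Fin n) = p ∨ (⟨0, by omega⟩ : Fin n) = q := by
      apply hmove
      rw [Fin.revPerm_apply, Fin.ne_iff_vne, Fin.val_rev]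
      simp; omega
    have m1 : (⟨1, by omega⟩ : Fin n) = p ∨ (⟨1, by omega⟩ : Fin n) = q := by
      apply hmove
      rw [Fin.revPerm_apply, Fin.ne_iff_vne, Fin.val_rev]
      simp; omega
    have m3 : (⟨n - 2, by omega⟩ : Fin n) = p ∨ (⟨n - 2, by omega⟩ : Fin n) = q := by
      apply hmove
      rw [Fin.revPerm_apply, Fin.ne_iff_vne, Fin.val_rev]
      simp; omega
    have hval : ∀ a b : Fin n, a = b → (a : ℕ) = (b : ℕ) := fun a b h => congrArg Fin.val h
    rcases m0 with h0 | h0 <;> rcases m1 with h1 | h1 <;> rcases m3 with h3 | h3 <;>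
      [skip; skip; skip; skip; skip; skip; skip; skip] <;>
      first
        | (exact absurd (hval _ _ (h0.trans h1.symm)) (by simp))
        | (exact absurd (hval _ _ (h0.trans h3.symm)) (by simp; omega))
        | (exact absurd (hval _ _ (h1.trans h3.symm)) (by simp; omega))
end
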